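/- arXiv:2104.07507 — 5 statements merged into one kernel-verified Lean document; each statement's English description precedes it below -/
import Mathlib

section
/- Cut-off energy estimate. Let n ∈ ℕ, p > 1, Λ ≥ 1, s_0 ∈ (0,1) and s_1,…,s_n ∈ [s_0,1). There is C = C(n,p,Λ) > 0 such that for each μ ∈ K(p,s_0,Λ), every x_0 ∈ ℝⁿ, r ∈ (0,1], λ ∈ (1,2], and every admissible cut-off function τ = τ_{x_0,r,λ}, one has sup_{x∈ℝⁿ} ∫_{ℝⁿ} |τ(y)−τ(x)|^p μ(x,dy) ≤ C (Σ_{k=1}^n (λ^{s_max/s_k}−1)^{−p s_k}) r^{−p s_max}. -/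
open MeasureTheory ENNReal Filter Set
open scoped ENNReal BigOperators Topology

noncomputable section

/-- `s_max`: the maximum of the orders `s k`. -/
def sMax {n : ℕ} (s : Fin n → ℝ) : ℝ := ⨆ k, s k

/-- `s̄`: the harmonic mean of the orders `s k`. -/
def sBar {n : ℕ} (s : Fin n → ℝ) : ℝ := ((1 / (n : ℝ)) * ∑ k, 1 / s k)⁻¹

/-- The anisotropic rectangle `M_r(x)`. -/
def Mrect {n : ℕ} (s : Fin n → ℝ) (r : ℝ) (x : Fin n → ℝ) : Set (Fin n → ℝ) :=
  {y | ∀ k, |y k - x k| < r ^ (sMax s / s k)}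

/-- The slab `E_r^k(x)`. -/
def Eslab {n : ℕ} (s : Fin n → ℝ) (r : ℝ) (k : Fin n) (x : Fin n → ℝ) : Set (Fin n → ℝ) :=
  {y | |x k - y k| < r ^ (sMax s / s k)}

/-- The reference family of measures `μ_axes(x, ·)`:
`μ_axes(x,dy) = ∑ k, s_k (1-s_k) |x_k - y_k|^{-1-s_k p} dy_k ∏_{i ≠ k} δ_{x_i}(dy_i)`. -/
def muAxes {n : ℕ} (p : ℝ) (s : Fin n → ℝ) (x : Fin n → ℝ) : Measure (Fin n → ℝ) :=
  ∑ k, Measure.map (fun t => Function.update x k t)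
    ((volume : Measure ℝ).withDensity
      fun t => ENNReal.ofReal (s k * (1 - s k) * |x k - t| ^ (-1 - s k * p)))

/-- The signed nonlinear form `E^μ_Ω(u,v)`. -/
def energyOn {n : ℕ} (p : ℝ) (μ : (Fin n → ℝ) → Measure (Fin n → ℝ))
    (Ω : Set (Fin n → ℝ)) (u v : (Fin n → ℝ) → ℝ) : ℝ :=
  ∫ x in Ω, ∫ y in Ω, |u y - u x| ^ (p - 2) * (u y - u x) * (v y - v x) ∂(μ x)

/-- The full-space form `E^μ(u,v)`. -/
def energy {n : ℕ} (p : ℝ) (μ : (Fin n → ℝ) → Measure (Fin n → ℝ))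
    (u v : (Fin n → ℝ) → ℝ) : ℝ := energyOn p μ Set.univ u v

/-- The symmetric `p`-energy `E^μ_Ω(u,u)`, as an extended-real integral. -/
def pEnergyOn {n : ℕ} (p : ℝ) (μ : (Fin n → ℝ) → Measure (Fin n → ℝ))
    (Ω : Set (Fin n → ℝ)) (u : (Fin n → ℝ) → ℝ) : ℝ≥0∞ :=
  ∫⁻ x in Ω, ∫⁻ y in Ω, ENNReal.ofReal (|u y - u x| ^ p) ∂(μ x)

/-- The class `K(p, s_0, Λ)` of admissible families of measures. -/
structure MemK {n : ℕ} (p s0 Λ : ℝ) (s : Fin n → ℝ)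
    (μ : (Fin n → ℝ) → Measure (Fin n → ℝ)) : Prop where
  finite : (⨆ x, ∫⁻ y, ENNReal.ofReal (min (dist x y ^ p) 1) ∂(μ x)) < ⊤
  symmetric : ∀ A B : Set (Fin n → ℝ), MeasurableSet A → MeasurableSet B →
    ∫⁻ x in A, μ x B = ∫⁻ x in B, μ x A
  tail : ∀ (x0 : Fin n → ℝ) (k : Fin n) (r : ℝ), 0 < r →
    μ x0 (Eslab s r k x0)ᶜ ≤ ENNReal.ofReal (Λ * (1 - s k) * r ^ (-(p * sMax s)))
  compare_le : ∀ (x0 : Fin n → ℝ) (ρ : ℝ), 0 < ρ → ρ < 3 →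
    ∀ u : (Fin n → ℝ) → ℝ,
      MemLp u (ENNReal.ofReal p) (volume.restrict (Mrect s ρ x0)) →
      pEnergyOn p μ (Mrect s ρ x0) u ≤
        ENNReal.ofReal Λ * pEnergyOn p (muAxes p s) (Mrect s ρ x0) u
  compare_ge : ∀ (x0 : Fin n → ℝ) (ρ : ℝ), 0 < ρ → ρ < 3 →
    ∀ u : (Fin n → ℝ) → ℝ,
      MemLp u (ENNReal.ofReal p) (volume.restrict (Mrect s ρ x0)) →
      pEnergyOn p (muAxes p s) (Mrect s ρ x0) u ≤
        ENNReal.ofReal Λ * pEnergyOn p μ (Mrect s ρ x0) u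

/-- Membership in the solution space `V^{p,μ}(Ω | ℝⁿ)`. -/
def MemV {n : ℕ} (p : ℝ) (μ : (Fin n → ℝ) → Measure (Fin n → ℝ))
    (Ω : Set (Fin n → ℝ)) (u : (Fin n → ℝ) → ℝ) : Prop :=
  Measurable u ∧ MemLp u (ENNReal.ofReal p) (volume.restrict Ω) ∧
    (∫⁻ x in Ω, ∫⁻ y, ENNReal.ofReal (|u y - u x| ^ p) ∂(μ x)) < ⊤

/-- Membership in the test-function space `H^{p,μ}_Ω(ℝⁿ)`. -/
def MemH {n : ℕ} (p : ℝ) (μ : (Fin n → ℝ) → Measure (Fin n → ℝ))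
    (Ω : Set (Fin n → ℝ)) (u : (Fin n → ℝ) → ℝ) : Prop :=
  Measurable u ∧ (∀ x, x ∉ Ω → u x = 0) ∧
    MemLp u (ENNReal.ofReal p) (volume.restrict Ω) ∧
    (∫⁻ x, ∫⁻ y, ENNReal.ofReal (|u y - u x| ^ p) ∂(μ x)) < ⊤

/-- An admissible cut-off function `τ = τ_{x0,r,λ}` with structural constant `c`:
a Lipschitz function supported in `M_{λr}(x0)`, bounded by one, equal to one on `M_r(x0)`,
whose (directional) Lipschitz constant in the `k`-th coordinate is at most
`c (λ^{s_max/s_k} - 1)⁻¹ r^{-s_max/s_k}`. -/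
def IsCutoff {n : ℕ} (s : Fin n → ℝ) (c : ℝ) (x0 : Fin n → ℝ) (r lam : ℝ)
    (τ : (Fin n → ℝ) → ℝ) : Prop :=
  (∃ L : NNReal, LipschitzWith L τ) ∧
  Function.support τ ⊆ Mrect s (lam * r) x0 ∧
  (∀ x, |τ x| ≤ 1) ∧
  (∀ x ∈ Mrect s r x0, τ x = 1) ∧
  (∀ (k : Fin n) (x : Fin n → ℝ) (h : ℝ),
    |τ (Function.update x k (x k + h)) - τ x| ≤
      c * (lam ^ (sMax s / s k) - 1)⁻¹ * r ^ (-(sMax s / s k)) * |h|)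


lemma aux_telescope {n : ℕ} (τ : (Fin n → ℝ) → ℝ) (b : Fin n → ℝ)
    (hτ : ∀ (k : Fin n) (x : Fin n → ℝ) (h : ℝ),
      |τ (Function.update x k (x k + h)) - τ x| ≤ b k * |h|)
    (x y : Fin n → ℝ) : |τ y - τ x| ≤ ∑ k, b k * |y k - x k| := by
  classical
  have key : ∀ A : Finset (Fin n),
      |τ (A.piecewise y x) - τ x| ≤ ∑ k ∈ A, b k * |y k - x k| := by
    intro A
    induction A using Finset.induction with
    | empty => simp
    | @insert a A ha ih =>
      rw [Finset.piecewise_insert, Finset.sum_insert ha]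
      set z := A.piecewise y x with hz
      have hza : z a = x a := Finset.piecewise_eq_of_notMem _ _ _ ha
      have h1 : |τ (Function.update z a (y a)) - τ z| ≤ b a * |y a - x a| := by
        have := hτ a z (y a - z a)
        rw [hza] at this
        simpa [add_sub_cancel, hza] using this
      calc |τ (Function.update z a (y a)) - τ x|
          ≤ |τ (Function.update z a (y a)) - τ z| + |τ z - τ x| := abs_sub_le _ _ _
        _ ≤ b a * |y a - x a| + ∑ k ∈ A, b k * |y k - x k| := add_le_add h1 ih
  simpa using key Finset.univ

lemma aux_dyadic (t : ℝ) (ht0 : 0 < t) (ht2 : t ≤ 2) :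
    ∃ j : ℕ, (1/2:ℝ)^j < t ∧ t ≤ 2 * (1/2:ℝ)^j := by
  obtain ⟨m, hm⟩ := exists_pow_lt_of_lt_one ht0 (by norm_num : (1/2:ℝ) < 1)
  have hex : ∃ j, (1/2:ℝ)^j < t := ⟨m, hm⟩
  classical
  let j := Nat.find hex
  refine ⟨j, Nat.find_spec hex, ?_⟩
  rcases Nat.eq_zero_or_pos j with hj | hj
  · rw [hj]; norm_num; exact ht2
  · obtain ⟨j', hjj⟩ := Nat.exists_eq_succ_of_ne_zero hj.ne'
    have hmin := Nat.find_min hex (m := j') (by omega)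
    push_neg at hmin
    rw [hjj]
    calc t ≤ (1/2:ℝ)^j' := hmin
      _ = 2 * (1/2:ℝ)^(j'+1) := by ring


lemma aux_geom (x p : ℝ) (hx0 : 0 < x) (hxp : x ≤ p) :
    ∑' j:ℕ, ENNReal.ofReal (((1/2:ℝ)^x)^j) ≤ ENNReal.ofReal ((2:ℝ)^(p+1)/x) := by
  set q := (1/2:ℝ)^x with hq
  have hq0 : 0 < q := Real.rpow_pos_of_pos (by norm_num) x
  have hq1 : q < 1 := Real.rpow_lt_one (by norm_num) (by norm_num) hx0
  have hsum : Summable (fun j:ℕ => q^j) := summable_geometric_of_lt_one hq0.le hq1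
  rw [← ENNReal.ofReal_tsum_of_nonneg (fun j => pow_nonneg hq0.le j) hsum,
    tsum_geometric_of_lt_one hq0.le hq1]
  apply ENNReal.ofReal_le_ofReal
  have hlog : (1/2:ℝ) < Real.log 2 := lt_trans (by norm_num) Real.log_two_gt_d9
  have hqe : q = Real.exp (-(Real.log 2 * x)) := by
    rw [hq, Real.rpow_def_of_pos (by norm_num : (0:ℝ) < 1/2), one_div, Real.log_inv]
    ring_nf
  have hE : Real.exp (Real.log 2 * x) * q = 1 := by
    rw [hqe, ← Real.exp_add]; simp
  have h1 := Real.add_one_le_exp (Real.log 2 * x)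
  have hEpos : 0 < Real.exp (Real.log 2 * x) := Real.exp_pos _
  have key : x * Real.log 2 * q ≤ 1 - q := by nlinarith
  have h2p : (2:ℝ)^(-p) ≤ q := by
    rw [hqe, Real.rpow_def_of_pos (by norm_num : (0:ℝ) < 2)]
    apply Real.exp_le_exp.2
    nlinarith
  have h2ppos : (0:ℝ) < (2:ℝ)^(-p) := Real.rpow_pos_of_pos (by norm_num) _
  have hlb : x * (1/2) * (2:ℝ)^(-p) ≤ 1 - q := by
    refine le_trans ?_ key
    have h3 : x * (1/2) ≤ x * Real.log 2 := mul_le_mul_of_nonneg_left hlog.le hx0.le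
    exact mul_le_mul h3 h2p h2ppos.le (by positivity)
  have hlbpos : 0 < x * (1/2) * (2:ℝ)^(-p) := by positivity
  calc (1-q)⁻¹ ≤ (x * (1/2) * (2:ℝ)^(-p))⁻¹ := by
        exact inv_anti₀ hlbpos hlb
    _ = (2:ℝ)^(p+1)/x := by
        rw [Real.rpow_add (by norm_num : (0:ℝ) < 2), Real.rpow_neg (by norm_num : (0:ℝ) ≤ 2),
          Real.rpow_one]
        field_simp

lemma aux_pow_rpow (a e : ℝ) (ha : 0 ≤ a) (j : ℕ) : (a^j)^e = (a^e)^j := by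
  rw [← Real.rpow_natCast a j, ← Real.rpow_mul ha, mul_comm, Real.rpow_mul ha, Real.rpow_natCast]

/-- **Cut-off energy estimate** (Lemma 2.2 of the paper). -/
theorem cutoff_energy_estimate
    (n : ℕ) (hn : 0 < n) (p Λ s0 : ℝ) (hp : 1 < p) (hΛ : 1 ≤ Λ)
    (hs0 : s0 ∈ Set.Ioo (0:ℝ) 1) (s : Fin n → ℝ) (hs : ∀ k, s k ∈ Set.Ico s0 1)
    (c : ℝ) (hc : 1 ≤ c) :
    ∃ C : ℝ, 0 < C ∧
      ∀ μ : (Fin n → ℝ) → Measure (Fin n → ℝ), MemK p s0 Λ s μ →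
      ∀ (x0 : Fin n → ℝ) (r lam : ℝ), r ∈ Set.Ioc (0:ℝ) 1 → lam ∈ Set.Ioc (1:ℝ) 2 →
      ∀ τ : (Fin n → ℝ) → ℝ, IsCutoff s c x0 r lam τ →
        (⨆ x : Fin n → ℝ, ∫⁻ y, ENNReal.ofReal (|τ y - τ x| ^ p) ∂(μ x)) ≤
          ENNReal.ofReal (C * (∑ k, (lam ^ (sMax s / s k) - 1) ^ (-(p * s k))) *
            r ^ (-(p * sMax s))) := by
  classical
  haveI : Nonempty (Fin n) := ⟨⟨0, hn⟩⟩
  have hp0 : (0:ℝ) < p := lt_trans one_pos hp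
  have hΛ0 : (0:ℝ) < Λ := lt_of_lt_of_le one_pos hΛ
  have hsk0 : ∀ k, 0 < s k := fun k => lt_of_lt_of_le hs0.1 (hs k).1
  have hsk1 : ∀ k, s k < 1 := fun k => (hs k).2
  have hbdd : BddAbove (Set.range s) := (Set.finite_range s).bddAbove
  have hsmle : ∀ k, s k ≤ sMax s := fun k => le_ciSup hbdd k
  obtain ⟨k0, hk0⟩ := Finite.exists_max s
  have hsm1 : sMax s < 1 := lt_of_le_of_lt (ciSup_le hk0) (hsk1 k0)
  have hsm0 : 0 < sMax s := lt_of_lt_of_le (hsk0 k0) (hsmle k0)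
  have hnc1 : (1:ℝ) ≤ (n:ℝ) * c := by
    have : (1:ℝ) ≤ (n:ℝ) := by exact_mod_cast hn
    nlinarith
  have hnc0 : (0:ℝ) < (n:ℝ) * c := lt_of_lt_of_le one_pos hnc1
  refine ⟨Λ * 2^(2*p+1) * ((n:ℝ)*c)^p,
    mul_pos (mul_pos hΛ0 (Real.rpow_pos_of_pos two_pos _)) (Real.rpow_pos_of_pos hnc0 _), ?_⟩
  set C : ℝ := Λ * (2:ℝ)^(2*p+1) * ((n:ℝ)*c)^p with hC
  intro μ hμ x0 r lam hr hlam τ hτ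
  obtain ⟨hLip, hsupp, hbd1, hone, hinc⟩ := hτ
  have hr0 : 0 < r := hr.1
  have hlam1 : 1 < lam := hlam.1
  set m : Fin n → ℝ := fun k => sMax s / s k with hm
  have hm0 : ∀ k, 0 < m k := fun k => div_pos hsm0 (hsk0 k)
  have hL0 : ∀ k, 0 < lam ^ m k - 1 := by
    intro k
    have : 1 < lam ^ m k :=
      Real.one_lt_rpow_iff_of_pos (lt_trans one_pos hlam1) |>.2 (Or.inl ⟨hlam1, hm0 k⟩)
    linarith
  set b : Fin n → ℝ := fun k => c * (lam ^ m k - 1)⁻¹ * r ^ (-(m k)) with hb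
  have hb0 : ∀ k, 0 < b k := by
    intro k
    have := hL0 k
    have := Real.rpow_pos_of_pos hr0 (-(m k))
    have hc0 : (0:ℝ) < c := lt_of_lt_of_le one_pos hc
    positivity
  set β : Fin n → ℝ := fun k => (lam ^ m k - 1) * r ^ m k / ((n:ℝ)*c) with hβ
  have hβ0 : ∀ k, 0 < β k := by
    intro k
    have := hL0 k
    have := Real.rpow_pos_of_pos hr0 (m k)
    positivity
  set hh : ℕ → Fin n → ℝ := fun j k => (1/2:ℝ)^j * β k with hhh
  have hh0 : ∀ j k, 0 < hh j k := fun j k => by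
    have := hβ0 k
    positivity
  have hbh : ∀ j k, b k * hh j k = (1/2:ℝ)^j / n := by
    intro j k
    have h1 := hL0 k
    have h2 : (0:ℝ) < r ^ m k := Real.rpow_pos_of_pos hr0 (m k)
    have h3 : r ^ (-(m k)) = (r ^ m k)⁻¹ := Real.rpow_neg hr0.le _
    have hc0 : (0:ℝ) < c := lt_of_lt_of_le one_pos hc
    have hn0 : (0:ℝ) < (n:ℝ) := by exact_mod_cast hn
    simp only [hb, hβ, hhh]
    rw [h3]
    field_simp
  set ρ : ℕ → Fin n → ℝ := fun j k => (hh j k) ^ (s k / sMax s) with hρ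
  have hρ0 : ∀ j k, 0 < ρ j k := fun j k => Real.rpow_pos_of_pos (hh0 j k) _
  have hρm : ∀ j k, (ρ j k) ^ (m k) = hh j k := by
    intro j k
    rw [hρ]
    simp only
    rw [← Real.rpow_mul (hh0 j k).le]
    have hk1 : s k ≠ 0 := (hsk0 k).ne'
    have hk2 : sMax s ≠ 0 := hsm0.ne'
    have : s k / sMax s * m k = 1 := by
      simp only [hm]; field_simp
    rw [this, Real.rpow_one]
  have hρp : ∀ j k, (ρ j k) ^ (-(p * sMax s)) = (hh j k) ^ (-(p * s k)) := by
    intro j k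
    rw [hρ]
    simp only
    rw [← Real.rpow_mul (hh0 j k).le]
    congr 1
    have hk1 : s k ≠ 0 := (hsk0 k).ne'
    have hk2 : sMax s ≠ 0 := hsm0.ne'
    field_simp
  apply iSup_le
  intro x
  set D : ℕ → Set (Fin n → ℝ) := fun j => {y | (1/2:ℝ)^j < |τ y - τ x|} with hD
  have hDmeas : ∀ j, MeasurableSet (D j) := by
    intro j
    obtain ⟨L, hL⟩ := hLip
    exact (isOpen_lt continuous_const ((hL.continuous.sub continuous_const).abs)).measurableSet
  set Cj : ℕ → ℝ≥0∞ := fun j => ENNReal.ofReal ((2*(1/2:ℝ)^j)^p) with hCj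
  -- Step A: pointwise dyadic bound
  have stepA : ∀ y, ENNReal.ofReal (|τ y - τ x| ^ p) ≤
      ∑' j, (D j).indicator (fun _ => Cj j) y := by
    intro y
    rcases eq_or_lt_of_le (abs_nonneg (τ y - τ x)) with h0 | h0
    · rw [← h0, Real.zero_rpow hp0.ne']
      simp
    · have h2 : |τ y - τ x| ≤ 2 := by
        have := hbd1 y
        have := hbd1 x
        have := abs_sub (τ y) (τ x)
        linarith [abs_sub_abs_le_abs_sub (τ y) (τ x), abs_sub (τ y) (τ x)]
      obtain ⟨j, hj1, hj2⟩ := aux_dyadic _ h0 h2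
      refine le_trans ?_ (ENNReal.le_tsum j)
      rw [Set.indicator_of_mem (by exact hj1 : y ∈ D j)]
      exact ENNReal.ofReal_le_ofReal
        (Real.rpow_le_rpow (abs_nonneg _) hj2 hp0.le)
  -- Step C: measure of level sets
  have stepC : ∀ j, μ x (D j) ≤
      ∑ k, ENNReal.ofReal (Λ * (1 - s k) * (hh j k) ^ (-(p * s k))) := by
    intro j
    have hsub : D j ⊆ ⋃ k, (Eslab s (ρ j k) k x)ᶜ := by
      intro y hy
      by_contra hnot
      simp only [Set.mem_iUnion, not_exists, Set.mem_compl_iff, not_not] at hnot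
      have hclose : ∀ k, |x k - y k| < hh j k := by
        intro k
        have hmem := hnot k
        simp only [Eslab, Set.mem_setOf_eq] at hmem
        rw [show sMax s / s k = m k by rw [hm], hρm j k] at hmem
        exact hmem
      have htel : |τ y - τ x| ≤ ∑ k, b k * |y k - x k| :=
        aux_telescope τ b hinc x y
      have hstrict : ∑ k, b k * |y k - x k| < ∑ k, b k * hh j k := by
        apply Finset.sum_lt_sum_of_nonempty Finset.univ_nonempty
        intro k _
        rw [abs_sub_comm]
        exact mul_lt_mul_of_pos_left (hclose k) (hb0 k)
      have hsum : ∑ k, b k * hh j k = (1/2:ℝ)^j := by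
        have hn0 : (0:ℝ) < (n:ℝ) := by exact_mod_cast hn
        simp only [hbh]
        rw [Finset.sum_const, Finset.card_univ, Fintype.card_fin, nsmul_eq_mul]
        field_simp
      have : |τ y - τ x| < (1/2:ℝ)^j := by
        rw [← hsum]; exact lt_of_le_of_lt htel hstrict
      exact absurd hy (not_lt.2 this.le)
    calc μ x (D j) ≤ μ x (⋃ k, (Eslab s (ρ j k) k x)ᶜ) := measure_mono hsub
      _ ≤ ∑' k, μ x (Eslab s (ρ j k) k x)ᶜ := measure_iUnion_le _
      _ = ∑ k, μ x (Eslab s (ρ j k) k x)ᶜ := tsum_fintype _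
      _ ≤ ∑ k, ENNReal.ofReal (Λ * (1 - s k) * (hh j k) ^ (-(p * s k))) := by
        apply Finset.sum_le_sum
        intro k _
        have := hμ.tail x k (ρ j k) (hρ0 j k)
        rwa [hρp j k] at this
  -- per-(j,k) term rewriting
  set g : Fin n → ℝ := fun k => Λ * (1 - s k) * (2:ℝ)^p * (β k) ^ (-(p * s k)) with hg
  have hg0 : ∀ k, 0 ≤ g k := by
    intro k
    have h1 : (0:ℝ) < 1 - s k := by linarith [hsk1 k]
    have := hβ0 k
    positivity
  have hterm : ∀ j k, Cj j * ENNReal.ofReal (Λ * (1 - s k) * (hh j k) ^ (-(p * s k))) =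
      ENNReal.ofReal (g k * ((1/2:ℝ)^(p * (1 - s k)))^j) := by
    intro j k
    have h12 : (0:ℝ) < (1/2:ℝ)^j := by positivity
    have hβk := hβ0 k
    rw [hCj, ← ENNReal.ofReal_mul (by positivity)]
    congr 1
    simp only [hhh]
    rw [Real.mul_rpow (by norm_num : (0:ℝ) ≤ 2) h12.le,
      Real.mul_rpow h12.le hβk.le]
    have e1 : ((1/2:ℝ)^j)^p * ((1/2:ℝ)^j)^(-(p * s k)) = ((1/2:ℝ)^(p * (1 - s k)))^j := by
      rw [← Real.rpow_add h12]
      rw [(by ring : p + -(p * s k) = p * (1 - s k))]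
      exact aux_pow_rpow _ _ (by norm_num) j
    calc (2:ℝ)^p * ((1/2:ℝ)^j)^p * (Λ * (1 - s k) * (((1/2:ℝ)^j)^(-(p * s k)) * (β k)^(-(p * s k))))
        = (Λ * (1 - s k) * (2:ℝ)^p * (β k)^(-(p * s k))) *
          (((1/2:ℝ)^j)^p * ((1/2:ℝ)^j)^(-(p * s k))) := by ring
      _ = g k * ((1/2:ℝ)^(p * (1 - s k)))^j := by rw [e1]
  -- per-k geometric sum bound
  have hperk : ∀ k, (∑' j : ℕ, ENNReal.ofReal (g k * ((1/2:ℝ)^(p * (1 - s k)))^j)) ≤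
      ENNReal.ofReal (C * (lam ^ (sMax s / s k) - 1) ^ (-(p * s k)) * r ^ (-(p * sMax s))) := by
    intro k
    have h1sk : (0:ℝ) < 1 - s k := by linarith [hsk1 k]
    have hx0 : 0 < p * (1 - s k) := by positivity
    have hxp : p * (1 - s k) ≤ p := by nlinarith [hsk0 k]
    have hq0 : (0:ℝ) ≤ (1/2:ℝ)^(p * (1 - s k)) := (Real.rpow_pos_of_pos (by norm_num) _).le
    calc (∑' j : ℕ, ENNReal.ofReal (g k * ((1/2:ℝ)^(p * (1 - s k)))^j))
        = ENNReal.ofReal (g k) * ∑' j : ℕ, ENNReal.ofReal (((1/2:ℝ)^(p * (1 - s k)))^j) := by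
          rw [← ENNReal.tsum_mul_left]
          congr 1; ext j
          rw [← ENNReal.ofReal_mul (hg0 k)]
      _ ≤ ENNReal.ofReal (g k) * ENNReal.ofReal ((2:ℝ)^(p+1) / (p * (1 - s k))) :=
          mul_le_mul_right (aux_geom _ p hx0 hxp) _
      _ = ENNReal.ofReal (g k * ((2:ℝ)^(p+1) / (p * (1 - s k)))) := by
          rw [← ENNReal.ofReal_mul (hg0 k)]
      _ ≤ ENNReal.ofReal (C * (lam ^ (sMax s / s k) - 1) ^ (-(p * s k)) * r ^ (-(p * sMax s))) := by
          apply ENNReal.ofReal_le_ofReal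
          have hβk := hβ0 k
          have hLk := hL0 k
          -- g k * 2^(p+1)/(p(1-sk)) = Λ * 2^p * 2^(p+1) * β^(-psk) / p
          have e2 : g k * ((2:ℝ)^(p+1) / (p * (1 - s k))) =
              Λ * ((2:ℝ)^p * (2:ℝ)^(p+1)) * (β k)^(-(p * s k)) / p := by
            simp only [hg]; field_simp
          rw [e2, ← Real.rpow_add (by norm_num : (0:ℝ) < 2),
            (by ring : p + (p+1) = 2*p+1)]
          -- β^(-psk) ≤ (nc)^p * (lam^mk-1)^(-psk) * r^(-p smax)
          have hLk' : (0:ℝ) < lam ^ (sMax s / s k) - 1 := by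
            have := hL0 k; simpa [hm] using this
          have e3 : (β k)^(-(p * s k)) =
              (lam ^ (sMax s / s k) - 1)^(-(p * s k)) * r^(-(p * sMax s)) * ((n:ℝ)*c)^(p * s k) := by
            simp only [hβ, hm]
            rw [div_eq_mul_inv,
              Real.mul_rpow (by positivity) (by positivity),
              Real.mul_rpow hLk'.le (Real.rpow_pos_of_pos hr0 _).le,
              ← Real.rpow_mul hr0.le,
              Real.inv_rpow hnc0.le, ← Real.rpow_neg hnc0.le, neg_neg]
            congr 2
            have hk1 : s k ≠ 0 := (hsk0 k).ne'
            congr 1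
            field_simp
          rw [e3, hC]
          have h4 : ((n:ℝ)*c)^(p * s k) ≤ ((n:ℝ)*c)^p :=
            Real.rpow_le_rpow_of_exponent_le hnc1 (by nlinarith [hsk1 k, hsk0 k])
          have hA0 : (0:ℝ) < Λ * (2:ℝ)^(2*p+1) :=
            mul_pos hΛ0 (Real.rpow_pos_of_pos two_pos _)
          have hLe0 : (0:ℝ) < (lam ^ (sMax s / s k) - 1)^(-(p * s k)) :=
            Real.rpow_pos_of_pos hLk' _
          have hR0 : (0:ℝ) < r ^ (-(p * sMax s)) := Real.rpow_pos_of_pos hr0 _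
          have hN10 : (0:ℝ) < ((n:ℝ)*c)^(p * s k) := Real.rpow_pos_of_pos hnc0 _
          set A := Λ * (2:ℝ)^(2*p+1) with hAdef
          set Le := (lam ^ (sMax s / s k) - 1)^(-(p * s k)) with hLedef
          set R := r ^ (-(p * sMax s)) with hRdef
          set N1 := ((n:ℝ)*c)^(p * s k) with hN1def
          set N2 := ((n:ℝ)*c)^p with hN2def
          calc A * (Le * R * N1) / p ≤ A * (Le * R * N1) :=
                div_le_self (mul_pos hA0 (mul_pos (mul_pos hLe0 hR0) hN10)).le hp.le
            _ = (A * Le * R) * N1 := by ring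
            _ ≤ (A * Le * R) * N2 :=
                mul_le_mul_of_nonneg_left h4 (mul_pos (mul_pos hA0 hLe0) hR0).le
            _ = A * N2 * Le * R := by ring
  -- final chain
  have hC0 : (0:ℝ) < C := by
    rw [hC]
    exact mul_pos (mul_pos hΛ0 (Real.rpow_pos_of_pos two_pos _)) (Real.rpow_pos_of_pos hnc0 _)
  have hL0' : ∀ k, (0:ℝ) < lam ^ (sMax s / s k) - 1 := by
    intro k; have := hL0 k; simpa [hm] using this
  calc ∫⁻ y, ENNReal.ofReal (|τ y - τ x| ^ p) ∂(μ x)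
      ≤ ∫⁻ y, ∑' j, (D j).indicator (fun _ => Cj j) y ∂(μ x) := lintegral_mono stepA
    _ = ∑' j, ∫⁻ y, (D j).indicator (fun _ => Cj j) y ∂(μ x) :=
        lintegral_tsum (fun j => (measurable_const.indicator (hDmeas j)).aemeasurable)
    _ = ∑' j, Cj j * μ x (D j) := by
        apply tsum_congr
        intro j
        rw [lintegral_indicator (hDmeas j), setLIntegral_const]
    _ ≤ ∑' j, ∑ k, Cj j * ENNReal.ofReal (Λ * (1 - s k) * (hh j k) ^ (-(p * s k))) := by
        apply ENNReal.tsum_le_tsum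
        intro j
        rw [← Finset.mul_sum]
        exact mul_le_mul_right (stepC j) _
    _ = ∑ k, ∑' j, Cj j * ENNReal.ofReal (Λ * (1 - s k) * (hh j k) ^ (-(p * s k))) :=
        Summable.tsum_finsetSum (fun k _ => ENNReal.summable)
    _ = ∑ k, ∑' j, ENNReal.ofReal (g k * ((1/2:ℝ)^(p * (1 - s k)))^j) := by
        apply Finset.sum_congr rfl
        intro k _
        exact tsum_congr (fun j => hterm j k)
    _ ≤ ∑ k, ENNReal.ofReal (C * (lam ^ (sMax s / s k) - 1) ^ (-(p * s k)) * r ^ (-(p * sMax s))) :=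
        Finset.sum_le_sum (fun k _ => hperk k)
    _ = ENNReal.ofReal (C * (∑ k, (lam ^ (sMax s / s k) - 1) ^ (-(p * s k))) * r ^ (-(p * sMax s))) := by
        rw [Finset.mul_sum, Finset.sum_mul, ENNReal.ofReal_sum_of_nonneg]
        intro k _
        exact (mul_pos (mul_pos hC0 (Real.rpow_pos_of_pos (hL0' k) _)) (Real.rpow_pos_of_pos hr0 _)).le
end
end

section
/- Tail cut-off estimate. Let n ∈ ℕ, p > 1, Λ ≥ 1, s_0 ∈ (0,1) and s_1,…,s_n ∈ [s_0,1). There is C = C(n,p,Λ) > 0 such that for each μ ∈ K(p,s_0,Λ), every x_0 ∈ ℝⁿ, r ∈ (0,1], λ ∈ (1,2], every admissible cut-off function τ = τ_{x_0,r,λ} and every u ∈ L^p(M_{λr}(x_0)), one has ∫_{M_{λr}(x_0)} ∫_{ℝⁿ∖M_{λr}(x_0)} |u(x)|^p |τ(x)|^p μ(x,dy) dx ≤ C (Σ_{k=1}^n (λ^{s_max/s_k}−1)^{−p s_k}) r^{−p s_max} ‖u‖_{L^p(M_{λr}(x_0))}^p. -/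
open MeasureTheory ENNReal Filter Set
open scoped ENNReal BigOperators Topology

noncomputable section

private lemma min_rpow_bound {A d p σ : ℝ} (hA : 0 < A) (hd : 0 < d)
    (hp : 0 < p) (hσ : 0 < σ) (hσ1 : σ ≤ 1) :
    min 1 (A * d) ^ p * d ^ (-(p * σ)) ≤ A ^ (p * σ) := by
  have hpσ : 0 ≤ p * σ := by positivity
  have hps : 0 ≤ p * (1 - σ) := by nlinarith
  rcases le_total (A * d) 1 with h | h
  · rw [min_eq_right h]
    have hd1 : d ≤ A⁻¹ := by
      rw [← mul_le_mul_iff_right₀ hA, mul_inv_cancel₀ hA.ne']; exact h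
    calc (A * d) ^ p * d ^ (-(p * σ))
        = A ^ p * (d ^ p * d ^ (-(p * σ))) := by
          rw [Real.mul_rpow hA.le hd.le]; ring
      _ = A ^ p * d ^ (p * (1 - σ)) := by
          rw [← Real.rpow_add hd]; ring_nf
      _ ≤ A ^ p * (A⁻¹) ^ (p * (1 - σ)) := by gcongr
      _ = A ^ p * A ^ (-(p * (1 - σ))) := by
          rw [Real.inv_rpow hA.le, ← Real.rpow_neg hA.le]
      _ = A ^ (p * σ) := by rw [← Real.rpow_add hA]; ring_nf
  · rw [min_eq_left h, Real.one_rpow, one_mul]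
    have hdinv : A⁻¹ ≤ d := by
      rw [← mul_le_mul_iff_right₀ hA, mul_inv_cancel₀ hA.ne']; exact h
    have h1 : (A⁻¹) ^ (p * σ) ≤ d ^ (p * σ) :=
      Real.rpow_le_rpow (by positivity) hdinv hpσ
    rw [Real.inv_rpow hA.le] at h1
    rw [Real.rpow_neg hd.le]
    exact inv_le_of_inv_le₀ (by positivity) h1

/-- **Tail cut-off estimate** (Corollary 2.3 of the paper). -/
theorem tail_cutoff_estimate
    (n : ℕ) (hn : 0 < n) (p Λ s0 : ℝ) (hp : 1 < p) (hΛ : 1 ≤ Λ)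
    (hs0 : s0 ∈ Set.Ioo (0:ℝ) 1) (s : Fin n → ℝ) (hs : ∀ k, s k ∈ Set.Ico s0 1)
    (c : ℝ) (hc : 1 ≤ c) :
    ∃ C : ℝ, 0 < C ∧
      ∀ μ : (Fin n → ℝ) → Measure (Fin n → ℝ), MemK p s0 Λ s μ →
      ∀ (x0 : Fin n → ℝ) (r lam : ℝ), r ∈ Set.Ioc (0:ℝ) 1 → lam ∈ Set.Ioc (1:ℝ) 2 →
      ∀ τ : (Fin n → ℝ) → ℝ, IsCutoff s c x0 r lam τ →
      ∀ u : (Fin n → ℝ) → ℝ,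
        MemLp u (ENNReal.ofReal p) (volume.restrict (Mrect s (lam * r) x0)) →
        (∫⁻ x in Mrect s (lam * r) x0,
            ∫⁻ _y in (Mrect s (lam * r) x0)ᶜ,
              ENNReal.ofReal (|u x| ^ p * |τ x| ^ p) ∂(μ x)) ≤
          ENNReal.ofReal (C * (∑ k, (lam ^ (sMax s / s k) - 1) ^ (-(p * s k))) *
            r ^ (-(p * sMax s)) *
            (eLpNorm u (ENNReal.ofReal p)
              (volume.restrict (Mrect s (lam * r) x0))).toReal ^ p) := by
  obtain ⟨hs0p, hs01⟩ := hs0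
  have hp0 : (0:ℝ) < p := by linarith
  have hc0 : (0:ℝ) < c := by linarith
  have hΛ0 : (0:ℝ) < Λ := by linarith
  refine ⟨Λ * c ^ p, by positivity, ?_⟩
  intro μ hμ x0 r lam hr hlam τ hτ u hu
  obtain ⟨hr0, hr1⟩ := hr
  obtain ⟨hlam1, hlam2⟩ := hlam
  have hlam0 : (0:ℝ) < lam := by linarith
  have hlr : (0:ℝ) < lam * r := by positivity
  have hspos : ∀ k, 0 < s k := fun k => lt_of_lt_of_le hs0p (hs k).1
  have hs1 : ∀ k, s k < 1 := fun k => (hs k).2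
  have hbdd : BddAbove (Set.range s) := (Set.finite_range s).bddAbove
  have hsMle : ∀ k, s k ≤ sMax s := fun k => le_ciSup hbdd k
  have hsMpos : 0 < sMax s := lt_of_lt_of_le (hspos ⟨0, hn⟩) (hsMle ⟨0, hn⟩)
  have haK : ∀ k, 0 < sMax s / s k := fun k => div_pos hsMpos (hspos k)
  have hlamgt : ∀ k, 1 < lam ^ (sMax s / s k) := by
    intro k
    have := Real.rpow_lt_rpow_of_exponent_lt hlam1 (haK k)
    rwa [Real.rpow_zero] at this
  set M := Mrect s (lam * r) x0 with hM
  have hMmeas : MeasurableSet M := by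
    have : M = ⋂ k, {y : Fin n → ℝ | |y k - x0 k| < (lam*r) ^ (sMax s / s k)} := by
      ext y; simp [hM, Mrect, Set.mem_iInter]
    rw [this]
    exact MeasurableSet.iInter fun k =>
      measurableSet_lt (((measurable_pi_apply k).sub measurable_const).abs) measurable_const
  -- the constant appearing in the pointwise bound
  set K : ℝ := Λ * c ^ p * (∑ k, (lam ^ (sMax s / s k) - 1) ^ (-(p * s k))) * r ^ (-(p * sMax s)) with hK
  have hSnn : (0:ℝ) ≤ ∑ k, (lam ^ (sMax s / s k) - 1) ^ (-(p * s k)) :=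
    Finset.sum_nonneg fun k _ => Real.rpow_nonneg (by linarith [hlamgt k]) _
  have hKnn : 0 ≤ K := by
    have : (0:ℝ) ≤ r ^ (-(p * sMax s)) := Real.rpow_nonneg hr0.le _
    positivity
  -- pointwise bound
  have key : ∀ x ∈ M, ENNReal.ofReal (|u x| ^ p * |τ x| ^ p) * μ x Mᶜ ≤
      ENNReal.ofReal K * ENNReal.ofReal (|u x| ^ p) := by
    intro x hx
    have hx' : ∀ k, |x k - x0 k| < (lam * r) ^ (sMax s / s k) := hx
    set d : Fin n → ℝ := fun k => (lam * r) ^ (sMax s / s k) - |x k - x0 k| with hd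
    have hdpos : ∀ k, 0 < d k := fun k => sub_pos.mpr (hx' k)
    set ρ : Fin n → ℝ := fun k => d k ^ (s k / sMax s) with hρ
    have hρpos : ∀ k, 0 < ρ k := fun k => Real.rpow_pos_of_pos (hdpos k) _
    have hρpow : ∀ k, ρ k ^ (sMax s / s k) = d k := by
      intro k
      have h1 : s k / sMax s * (sMax s / s k) = 1 := by
        field_simp
        rw [div_self (hspos k).ne']
      rw [hρ]
      rw [← Real.rpow_mul (hdpos k).le, h1, Real.rpow_one]
    have hcover : Mᶜ ⊆ ⋃ k, (Eslab s (ρ k) k x)ᶜ := by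
      intro y hy
      simp only [hM, Mrect, Set.mem_compl_iff, Set.mem_setOf_eq, not_forall, not_lt] at hy
      obtain ⟨k, hk⟩ := hy
      refine Set.mem_iUnion.mpr ⟨k, ?_⟩
      simp only [Eslab, Set.mem_compl_iff, Set.mem_setOf_eq, not_lt, hρpow k]
      have htri : |y k - x0 k| ≤ |y k - x k| + |x k - x0 k| := abs_sub_le _ _ _
      have hcomm : |x k - y k| = |y k - x k| := abs_sub_comm _ _
      have := hx' k
      simp only [hd]
      linarith
    -- tail bound for each slab
    have htail : ∀ k, μ x (Eslab s (ρ k) k x)ᶜ ≤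
        ENNReal.ofReal (Λ * (1 - s k) * ρ k ^ (-(p * sMax s))) :=
      fun k => hμ.tail x k (ρ k) (hρpos k)
    -- cut-off bounds
    have hτ1 : |τ x| ≤ 1 := hτ.2.2.1 x
    have hτd : ∀ k, |τ x| ≤
        c * (lam ^ (sMax s / s k) - 1)⁻¹ * r ^ (-(sMax s / s k)) * d k := by
      intro k
      set t : ℝ := if x0 k ≤ x k then x0 k + (lam * r) ^ (sMax s / s k)
        else x0 k - (lam * r) ^ (sMax s / s k) with ht
      have hz : Function.update x k t ∉ M := by
        intro hmem
        have hmk : |Function.update x k t k - x0 k| < (lam * r) ^ (sMax s / s k) := hmem k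
        rw [Function.update_self] at hmk
        have hP : (0:ℝ) < (lam * r) ^ (sMax s / s k) := Real.rpow_pos_of_pos hlr _
        rcases le_or_gt (x0 k) (x k) with h | h
        · rw [ht, if_pos h] at hmk
          rw [show x0 k + (lam * r) ^ (sMax s / s k) - x0 k = (lam * r) ^ (sMax s / s k) by ring,
            abs_of_pos hP] at hmk
          exact lt_irrefl _ hmk
        · rw [ht, if_neg (not_le.mpr h)] at hmk
          rw [show x0 k - (lam * r) ^ (sMax s / s k) - x0 k = -((lam * r) ^ (sMax s / s k)) by ring,
            abs_neg, abs_of_pos hP] at hmk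
          exact lt_irrefl _ hmk
      have hτz : τ (Function.update x k t) = 0 := by
        by_contra h
        exact hz (hτ.2.1 (Function.mem_support.mpr h))
      have hlip := hτ.2.2.2.2 k x (t - x k)
      rw [show x k + (t - x k) = t by ring, hτz, zero_sub, abs_neg] at hlip
      have habs : |t - x k| = d k := by
        have hdk : d k = (lam * r) ^ (sMax s / s k) - |x k - x0 k| := rfl
        rw [hdk]
        rcases le_or_gt (x0 k) (x k) with h | h
        · have ha : |x k - x0 k| = x k - x0 k := abs_of_nonneg (by linarith)
          have hb : x k - x0 k < (lam * r) ^ (sMax s / s k) := by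
            rw [← ha]; exact hx' k
          rw [ht, if_pos h, ha, abs_of_nonneg (by linarith)]
          ring
        · have ha : |x k - x0 k| = x0 k - x k := by
            rw [abs_of_neg (by linarith)]; ring
          have hb : x0 k - x k < (lam * r) ^ (sMax s / s k) := by
            rw [← ha]; exact hx' k
          rw [ht, if_neg (not_le.mpr h), ha, abs_of_nonpos (by linarith)]
          ring
      calc |τ x| ≤ c * (lam ^ (sMax s / s k) - 1)⁻¹ * r ^ (-(sMax s / s k)) * |t - x k| := hlip
        _ = c * (lam ^ (sMax s / s k) - 1)⁻¹ * r ^ (-(sMax s / s k)) * d k := by rw [habs]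
    -- the per-coordinate real estimate
    have hreal : ∀ k, |τ x| ^ p * (Λ * (1 - s k) * ρ k ^ (-(p * sMax s))) ≤
        Λ * c ^ p * ((lam ^ (sMax s / s k) - 1) ^ (-(p * s k)) * r ^ (-(p * sMax s))) := by
      intro k
      set A : ℝ := c * (lam ^ (sMax s / s k) - 1)⁻¹ * r ^ (-(sMax s / s k)) with hA
      have hApos : 0 < A := by
        have h1 : 0 < (lam ^ (sMax s / s k) - 1)⁻¹ :=
          inv_pos.mpr (by linarith [hlamgt k])
        have h2 : (0:ℝ) < r ^ (-(sMax s / s k)) := Real.rpow_pos_of_pos hr0 _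
        exact mul_pos (mul_pos hc0 h1) h2
      have h1 : ρ k ^ (-(p * sMax s)) = d k ^ (-(p * s k)) := by
        rw [hρ, ← Real.rpow_mul (hdpos k).le]
        congr 1
        field_simp
      have h2 : |τ x| ^ p ≤ min 1 (A * d k) ^ p :=
        Real.rpow_le_rpow (abs_nonneg _) (le_min hτ1 (hτd k)) hp0.le
      have h3 : min 1 (A * d k) ^ p * d k ^ (-(p * s k)) ≤ A ^ (p * s k) :=
        min_rpow_bound hApos (hdpos k) hp0 (hspos k) (hs1 k).le
      have h4 : A ^ (p * s k) ≤
          c ^ p * ((lam ^ (sMax s / s k) - 1) ^ (-(p * s k)) * r ^ (-(p * sMax s))) := by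
        have hlg : (0:ℝ) < lam ^ (sMax s / s k) - 1 := by linarith [hlamgt k]
        have e1 : ((lam ^ (sMax s / s k) - 1)⁻¹ : ℝ) ^ (p * s k)
            = (lam ^ (sMax s / s k) - 1) ^ (-(p * s k)) := by
          rw [Real.inv_rpow hlg.le, ← Real.rpow_neg hlg.le]
        have e2 : (r ^ (-(sMax s / s k))) ^ (p * s k) = r ^ (-(p * sMax s)) := by
          rw [← Real.rpow_mul hr0.le]
          congr 1
          field_simp [(hspos k).ne']
        have he : A ^ (p * s k) = c ^ (p * s k) *
            ((lam ^ (sMax s / s k) - 1) ^ (-(p * s k)) * r ^ (-(p * sMax s))) := by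
          rw [hA, Real.mul_rpow (by positivity) (Real.rpow_nonneg hr0.le _),
            Real.mul_rpow hc0.le (by positivity), e1, e2]
          ring
        rw [he]
        have : c ^ (p * s k) ≤ c ^ p :=
          Real.rpow_le_rpow_of_exponent_le hc (by nlinarith [hs1 k])
        have hnn : (0:ℝ) ≤ (lam ^ (sMax s / s k) - 1) ^ (-(p * s k)) * r ^ (-(p * sMax s)) := by
          have := Real.rpow_nonneg hlg.le (-(p * s k))
          have := Real.rpow_nonneg hr0.le (-(p * sMax s))
          positivity
        exact mul_le_mul_of_nonneg_right this hnn
      have hτnn : (0:ℝ) ≤ |τ x| ^ p := Real.rpow_nonneg (abs_nonneg _) _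
      have hdnn : (0:ℝ) ≤ d k ^ (-(p * s k)) := Real.rpow_nonneg (hdpos k).le _
      have hsk1 : (0:ℝ) < 1 - s k := by linarith [hs1 k]
      calc |τ x| ^ p * (Λ * (1 - s k) * ρ k ^ (-(p * sMax s)))
          = (Λ * (1 - s k)) * (|τ x| ^ p * d k ^ (-(p * s k))) := by rw [h1]; ring
        _ ≤ (Λ * (1 - s k)) * (min 1 (A * d k) ^ p * d k ^ (-(p * s k))) := by
            have : |τ x| ^ p * d k ^ (-(p * s k)) ≤ min 1 (A * d k) ^ p * d k ^ (-(p * s k)) :=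
              mul_le_mul_of_nonneg_right h2 hdnn
            exact mul_le_mul_of_nonneg_left this (by positivity)
        _ ≤ (Λ * (1 - s k)) * A ^ (p * s k) :=
            mul_le_mul_of_nonneg_left h3 (by positivity)
        _ ≤ Λ * A ^ (p * s k) := by
            have : Λ * (1 - s k) ≤ Λ := by nlinarith [hspos k]
            exact mul_le_mul_of_nonneg_right this (Real.rpow_nonneg hApos.le _)
        _ ≤ Λ * (c ^ p * ((lam ^ (sMax s / s k) - 1) ^ (-(p * s k)) * r ^ (-(p * sMax s)))) :=
            mul_le_mul_of_nonneg_left h4 hΛ0.le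
        _ = Λ * c ^ p * ((lam ^ (sMax s / s k) - 1) ^ (-(p * s k)) * r ^ (-(p * sMax s))) := by
            ring
    -- assemble the ENNReal estimate
    have hupnn : (0:ℝ) ≤ |u x| ^ p := Real.rpow_nonneg (abs_nonneg _) _
    have hτpnn : (0:ℝ) ≤ |τ x| ^ p := Real.rpow_nonneg (abs_nonneg _) _
    calc ENNReal.ofReal (|u x| ^ p * |τ x| ^ p) * μ x Mᶜ
        ≤ ENNReal.ofReal (|u x| ^ p * |τ x| ^ p) * ∑ k, μ x (Eslab s (ρ k) k x)ᶜ := by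
          exact mul_le_mul_right ((measure_mono hcover).trans (measure_iUnion_fintype_le _ _)) _
      _ = ∑ k, ENNReal.ofReal (|u x| ^ p) * (ENNReal.ofReal (|τ x| ^ p) * μ x (Eslab s (ρ k) k x)ᶜ) := by
          rw [Finset.mul_sum]
          refine Finset.sum_congr rfl fun k _ => ?_
          rw [ENNReal.ofReal_mul hupnn, mul_assoc]
      _ ≤ ∑ k, ENNReal.ofReal (|u x| ^ p) *
            ENNReal.ofReal (Λ * c ^ p * ((lam ^ (sMax s / s k) - 1) ^ (-(p * s k)) * r ^ (-(p * sMax s)))) := by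
          refine Finset.sum_le_sum fun k _ => ?_
          refine mul_le_mul_right ?_ _
          calc ENNReal.ofReal (|τ x| ^ p) * μ x (Eslab s (ρ k) k x)ᶜ
              ≤ ENNReal.ofReal (|τ x| ^ p) * ENNReal.ofReal (Λ * (1 - s k) * ρ k ^ (-(p * sMax s))) :=
                mul_le_mul_right (htail k) _
            _ = ENNReal.ofReal (|τ x| ^ p * (Λ * (1 - s k) * ρ k ^ (-(p * sMax s)))) :=
                (ENNReal.ofReal_mul hτpnn).symm
            _ ≤ _ := ENNReal.ofReal_le_ofReal (hreal k)
      _ = ENNReal.ofReal K * ENNReal.ofReal (|u x| ^ p) := by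
          have hgnn : ∀ k, (0:ℝ) ≤ Λ * c ^ p *
              ((lam ^ (sMax s / s k) - 1) ^ (-(p * s k)) * r ^ (-(p * sMax s))) := by
            intro k
            have h1 : (0:ℝ) ≤ (lam ^ (sMax s / s k) - 1) ^ (-(p * s k)) :=
              Real.rpow_nonneg (by linarith [hlamgt k]) _
            have h2 : (0:ℝ) ≤ r ^ (-(p * sMax s)) := Real.rpow_nonneg hr0.le _
            positivity
          have hKsum : ∑ k, Λ * c ^ p *
              ((lam ^ (sMax s / s k) - 1) ^ (-(p * s k)) * r ^ (-(p * sMax s))) = K := by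
            rw [hK]
            calc ∑ k, Λ * c ^ p *
                ((lam ^ (sMax s / s k) - 1) ^ (-(p * s k)) * r ^ (-(p * sMax s)))
                = ∑ k, (Λ * c ^ p * (lam ^ (sMax s / s k) - 1) ^ (-(p * s k))) *
                    r ^ (-(p * sMax s)) :=
                  Finset.sum_congr rfl fun k _ => by ring
              _ = (∑ k, Λ * c ^ p * (lam ^ (sMax s / s k) - 1) ^ (-(p * s k))) *
                    r ^ (-(p * sMax s)) := by rw [← Finset.sum_mul]
              _ = Λ * c ^ p * (∑ k, (lam ^ (sMax s / s k) - 1) ^ (-(p * s k))) *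
                    r ^ (-(p * sMax s)) := by rw [← Finset.mul_sum, mul_assoc]
          rw [← Finset.mul_sum, ← ENNReal.ofReal_sum_of_nonneg (fun k _ => hgnn k), hKsum,
            mul_comm]
  -- finish: integrate
  have hq0 : (ENNReal.ofReal p) ≠ 0 := by
    simp only [ne_eq, ENNReal.ofReal_eq_zero, not_le]; linarith
  have hqt : (ENNReal.ofReal p) ≠ ⊤ := ENNReal.ofReal_ne_top
  have hqr : (ENNReal.ofReal p).toReal = p := ENNReal.toReal_ofReal hp0.le
  set N : ℝ := (eLpNorm u (ENNReal.ofReal p) (volume.restrict M)).toReal with hN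
  have hInt : ∫⁻ x in M, ENNReal.ofReal (|u x| ^ p) = ENNReal.ofReal (N ^ p) := by
    have h1 : eLpNorm u (ENNReal.ofReal p) (volume.restrict M)
        = (∫⁻ x in M, ENNReal.ofReal (|u x| ^ p)) ^ (1 / p) := by
      rw [eLpNorm_eq_lintegral_rpow_enorm_toReal hq0 hqt, hqr]
      congr 1
      refine lintegral_congr fun x => ?_
      rw [← Real.norm_eq_abs, ← ofReal_norm,
        ENNReal.ofReal_rpow_of_nonneg (norm_nonneg _) hp0.le]
    have h2 : (∫⁻ x in M, ENNReal.ofReal (|u x| ^ p))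
        = (eLpNorm u (ENNReal.ofReal p) (volume.restrict M)) ^ p := by
      rw [h1, ← ENNReal.rpow_mul, one_div, inv_mul_cancel₀ hp0.ne', ENNReal.rpow_one]
    rw [h2, ← ENNReal.ofReal_toReal hu.2.ne, ← hN,
      ENNReal.ofReal_rpow_of_nonneg ENNReal.toReal_nonneg hp0.le]
  calc (∫⁻ x in M, ∫⁻ _y in Mᶜ, ENNReal.ofReal (|u x| ^ p * |τ x| ^ p) ∂(μ x))
      = ∫⁻ x in M, ENNReal.ofReal (|u x| ^ p * |τ x| ^ p) * μ x Mᶜ := by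
        refine lintegral_congr fun x => ?_
        exact setLIntegral_const _ _
    _ ≤ ∫⁻ x in M, ENNReal.ofReal K * ENNReal.ofReal (|u x| ^ p) := by
        refine lintegral_mono_ae ?_
        filter_upwards [ae_restrict_mem hMmeas] with x hx
        exact key x hx
    _ = ENNReal.ofReal K * ∫⁻ x in M, ENNReal.ofReal (|u x| ^ p) :=
        lintegral_const_mul' _ _ ENNReal.ofReal_ne_top
    _ = ENNReal.ofReal K * ENNReal.ofReal (N ^ p) := by rw [hInt]
    _ = ENNReal.ofReal (K * N ^ p) := (ENNReal.ofReal_mul hKnn).symm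
    _ = ENNReal.ofReal (Λ * c ^ p * (∑ k, (lam ^ (sMax s / s k) - 1) ^ (-(p * s k))) *
          r ^ (-(p * sMax s)) * N ^ p) := by rw [hK]
end
end

section
/- Discrete gradient algebraic inequality. Let a, b > 0, τ_1, τ_2 ∈ [0,1], and t > p−1 > 0. Then |b−a|^{p−2}(b−a)(τ_1^p a^{−t} − τ_2^p b^{−t}) ≥ c_1 |τ_1 a^{(−t+p−1)/p} − τ_2 b^{(−t+p−1)/p}|^p − c_2 |τ_1−τ_2|^p (a^{−t+p−1} + b^{−t+p−1}), where one may take c_1 = 2^{1−p} p^p / (t−p+1)^{p−1} and c_2 = (t + 2^{1−p}(p−1)) (p/(t−p+1))^p + 2^{2(p−1)²}; in particular c_1 = c_1(p,t) > 0 and c_2 = c_2(p,t) > 0 remain bounded when t is bounded away from p−1. -/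
open Real Set

namespace DGI

/-- Tangent line inequality: convexity of `w ↦ w^p` at `w = z`. -/
lemma tangent {p z w : ℝ} (hp : 1 ≤ p) (hz : 0 < z) (hw : 0 ≤ w) :
    p * w - (p - 1) * z ≤ z ^ (1 - p) * w ^ p := by
  have hwz : (0:ℝ) ≤ w / z := div_nonneg hw hz.le
  have h1 : (-1:ℝ) ≤ w / z - 1 := by linarith
  have hb := one_add_mul_self_le_rpow_one_add h1 hp
  have e0 : (1:ℝ) + (w / z - 1) = w / z := by ring
  rw [e0] at hb
  have hzp : (0:ℝ) < z ^ p := Real.rpow_pos_of_pos hz p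
  have e1 : z ^ (1 - p) * w ^ p = z * (w / z) ^ p := by
    rw [Real.div_rpow hw hz.le, Real.rpow_sub hz, Real.rpow_one]
    field_simp
  have e2 : z * (1 + p * (w / z - 1)) = p * w - (p - 1) * z := by
    field_simp
    ring
  rw [e1, ← e2]
  exact mul_le_mul_of_nonneg_left hb hz.le

/-- Two-point convexity splitting: `(x+y)^p ≤ l^(1-p) x^p + (1-l)^(1-p) y^p`. -/
lemma split {p l x y : ℝ} (hp : 1 < p) (hl0 : 0 < l) (hl1 : l < 1) (hx : 0 ≤ x) (hy : 0 ≤ y) :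
    (x + y) ^ p ≤ l ^ (1 - p) * x ^ p + (1 - l) ^ (1 - p) * y ^ p := by
  have hp0 : (0:ℝ) < p := by linarith
  rcases eq_or_lt_of_le (add_nonneg hx hy) with h0 | hS
  · have hx0 : x = 0 := by linarith
    have hy0 : y = 0 := by linarith
    rw [hx0, hy0, add_zero, Real.zero_rpow hp0.ne']
    simp [Real.zero_rpow hp0.ne']
  · set S := x + y with hSdef
    have t1 := tangent hp.le hl0 (div_nonneg hx hS.le)
    have t2 := tangent hp.le (by linarith : (0:ℝ) < 1 - l) (div_nonneg hy hS.le)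
    have hdiv : x / S + y / S = 1 := by field_simp; linarith
    have hsum : 1 ≤ l ^ (1 - p) * (x / S) ^ p + (1 - l) ^ (1 - p) * (y / S) ^ p := by
      nlinarith [t1, t2]
    have hSp : (0:ℝ) < S ^ p := Real.rpow_pos_of_pos hS p
    have e1 : (x / S) ^ p = x ^ p / S ^ p := Real.div_rpow hx hS.le p
    have e2 : (y / S) ^ p = y ^ p / S ^ p := Real.div_rpow hy hS.le p
    rw [e1, e2] at hsum
    have := mul_le_mul_of_nonneg_right hsum hSp.le
    calc S ^ p = 1 * S ^ p := (one_mul _).symm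
      _ ≤ (l ^ (1-p) * (x ^ p / S ^ p) + (1-l) ^ (1-p) * (y ^ p / S ^ p)) * S ^ p := this
      _ = l ^ (1 - p) * x ^ p + (1 - l) ^ (1 - p) * y ^ p := by
          field_simp

/-- Key one-dimensional inequality (root form). -/
lemma holder_root {p t a b : ℝ} (hp : 1 < p) (ht : p - 1 < t) (ha : 0 < a) (hab : a ≤ b) :
    a ^ (-((t-p+1)/p)) - b ^ (-((t-p+1)/p))
      ≤ (t-p+1)/p * ((b-a) ^ (p-1) * (a ^ (-t) - b ^ (-t)) / t) ^ (1/p) := by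
  have hp0 : (0:ℝ) < p := by linarith
  have ht0 : (0:ℝ) < t := by linarith
  have htp : (0:ℝ) < t - p + 1 := by linarith
  set α : ℝ := (t - p + 1)/p with hαdef
  have hα : 0 < α := div_pos htp hp0
  set u : ℝ → ℝ := fun x => (x - a) ^ (p-1) * (a ^ (-t) - x ^ (-t)) / t with hu
  set f : ℝ → ℝ := fun x => α * u x ^ (1/p) - a ^ (-α) + x ^ (-α) with hf
  have hcont : ContinuousOn f (Icc a b) := by
    have c1 : ContinuousOn (fun x : ℝ => (x - a) ^ (p-1)) (Icc a b) := by
      apply ContinuousOn.rpow_const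
      · exact (continuous_id.sub continuous_const).continuousOn
      · intro x _; right; linarith
    have c2 : ContinuousOn (fun x : ℝ => a ^ (-t) - x ^ (-t)) (Icc a b) := by
      apply ContinuousOn.sub continuousOn_const
      apply ContinuousOn.rpow_const continuousOn_id
      intro x hx; left; exact ne_of_gt (lt_of_lt_of_le ha hx.1)
    have cu : ContinuousOn u (Icc a b) := (c1.mul c2).div_const t
    have cup : ContinuousOn (fun x => u x ^ (1/p)) (Icc a b) := by
      apply cu.rpow_const; intro x _; right; positivity
    have c3 : ContinuousOn (fun x : ℝ => x ^ (-α)) (Icc a b) := by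
      apply ContinuousOn.rpow_const continuousOn_id
      intro x hx; left; exact ne_of_gt (lt_of_lt_of_le ha hx.1)
    exact ((continuousOn_const.mul cup).sub continuousOn_const).add c3
  have hderiv : ∀ x ∈ Ioo a b, ∃ f' : ℝ, HasDerivAt f f' x ∧ 0 ≤ f' := by
    intro x hx
    have hxa : 0 < x - a := sub_pos.2 hx.1
    have hx0 : 0 < x := lt_of_le_of_lt ha.le hx.1
    have hat : x ^ (-t) < a ^ (-t) := rpow_lt_rpow_of_neg ha hx.1 (by linarith)
    have hupos : 0 < u x := by
      apply div_pos _ ht0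
      exact mul_pos (rpow_pos_of_pos hxa _) (by linarith)
    have h1 : HasDerivAt (fun y : ℝ => (y - a) ^ (p-1)) ((p-1) * (x-a) ^ (p-2)) x := by
      have h := ((hasDerivAt_id x).sub_const a).rpow_const (p := p-1) (Or.inl hxa.ne')
      simp only [id_eq, one_mul] at h
      rwa [show p - 1 - 1 = p - 2 by ring] at h
    have h2 : HasDerivAt (fun y : ℝ => a ^ (-t) - y ^ (-t)) (t * x ^ (-t-1)) x := by
      have := (hasDerivAt_rpow_const (p := -t) (Or.inl hx0.ne')).const_sub (a ^ (-t))
      rw [show t * x ^ (-t-1) = -(-t * x ^ (-t - 1)) by ring]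
      exact this
    have hu' : HasDerivAt u
        (((p-1) * (x-a) ^ (p-2) * (a ^ (-t) - x ^ (-t)) + (x-a) ^ (p-1) * (t * x ^ (-t-1))) / t)
        x := (h1.mul h2).div_const t
    set A : ℝ := (x-a) ^ (p-2) * (a ^ (-t) - x ^ (-t)) / t with hA
    set B : ℝ := (x-a) ^ (p-1) * x ^ (-t-1) with hB
    have hu'' : HasDerivAt u ((p-1) * A + B) x := by
      convert hu' using 1
      rw [hA, hB]
      field_simp
    have hup : HasDerivAt (fun y => u y ^ (1/p))
        (((p-1) * A + B) * (1/p) * u x ^ (1/p - 1)) x :=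
      hu''.rpow_const (Or.inl hupos.ne')
    have h3 : HasDerivAt (fun y : ℝ => y ^ (-α)) (-α * x ^ (-α-1)) x :=
      hasDerivAt_rpow_const (Or.inl hx0.ne')
    refine ⟨α * (((p-1) * A + B) * (1/p) * u x ^ (1/p - 1)) + (-α * x ^ (-α-1)), ?_, ?_⟩
    · exact ((hup.const_mul α).sub_const (a ^ (-α))).add h3
    · have hA0 : 0 ≤ A := by
        apply div_nonneg _ ht0.le
        exact mul_nonneg (rpow_nonneg hxa.le _) (by linarith)
      have hB0 : 0 ≤ B := mul_nonneg (rpow_nonneg hxa.le _) (rpow_nonneg hx0.le _)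
      have hw : (p-1)/p + 1/p = 1 := by field_simp; ring
      have amgm := Real.geom_mean_le_arith_mean2_weighted
        (div_nonneg (by linarith) hp0.le) (by positivity : (0:ℝ) ≤ 1/p) hA0 hB0 hw
      have key : A ^ ((p-1)/p) * B ^ (1/p) = u x ^ ((p-1)/p) * x ^ ((-t-1)/p) := by
        have e1 : A = (x-a) ^ (p-2) * ((a ^ (-t) - x ^ (-t)) / t) := by rw [hA]; ring
        have e2 : u x = (x-a) ^ (p-1) * ((a ^ (-t) - x ^ (-t)) / t) := by rw [hu]; ring
        have hQ : (0:ℝ) ≤ (a ^ (-t) - x ^ (-t)) / t := div_nonneg (by linarith) ht0.le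
        rw [e1, e2, hB]
        rw [Real.mul_rpow (rpow_nonneg hxa.le _) hQ,
            Real.mul_rpow (rpow_nonneg hxa.le _) (rpow_nonneg hx0.le _),
            Real.mul_rpow (rpow_nonneg hxa.le _) hQ,
            ← Real.rpow_mul hxa.le, ← Real.rpow_mul hxa.le, ← Real.rpow_mul hxa.le,
            ← Real.rpow_mul hx0.le]
        rw [show (-t-1) * (1/p) = (-t-1)/p by ring]
        have e3 : (x-a) ^ ((p-2) * ((p-1)/p)) * (x-a) ^ ((p-1) * (1/p))
            = (x-a) ^ ((p-1) * ((p-1)/p)) := by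
          rw [← Real.rpow_add hxa]
          congr 1
          field_simp
          ring
        calc (x-a) ^ ((p-2) * ((p-1)/p)) * ((a ^ (-t) - x ^ (-t)) / t) ^ ((p-1)/p)
              * ((x-a) ^ ((p-1) * (1/p)) * x ^ ((-t-1)/p))
            = ((x-a) ^ ((p-2) * ((p-1)/p)) * (x-a) ^ ((p-1) * (1/p)))
              * ((a ^ (-t) - x ^ (-t)) / t) ^ ((p-1)/p) * x ^ ((-t-1)/p) := by ring
          _ = (x-a) ^ ((p-1) * ((p-1)/p)) * ((a ^ (-t) - x ^ (-t)) / t) ^ ((p-1)/p)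
              * x ^ ((-t-1)/p) := by rw [e3]
      have hx1 : x ^ ((-t-1)/p) = x ^ (-α-1) := by
        congr 1
        rw [hαdef]; field_simp; ring
      have hupow : 0 < u x ^ (1/p - 1) := rpow_pos_of_pos hupos _
      have step : x ^ (-α-1) ≤ ((p-1) * A + B) * (1/p) * u x ^ (1/p - 1) := by
        have h5 : u x ^ ((p-1)/p) * x ^ ((-t-1)/p) ≤ (p-1)/p * A + 1/p * B := by
          rw [← key]; exact amgm
        have h6 : u x ^ ((p-1)/p) * u x ^ (1/p - 1) = 1 := by
          rw [← Real.rpow_add hupos]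
          rw [show (p-1)/p + (1/p - 1) = 0 by field_simp; ring]
          exact rpow_zero _
        have h7 := mul_le_mul_of_nonneg_right h5 hupow.le
        calc x ^ (-α-1) = (u x ^ ((p-1)/p) * u x ^ (1/p-1)) * x ^ (-α-1) := by
              rw [h6, one_mul]
          _ = u x ^ ((p-1)/p) * x ^ ((-t-1)/p) * u x ^ (1/p-1) := by rw [hx1]; ring
          _ ≤ ((p-1)/p * A + 1/p * B) * u x ^ (1/p-1) := h7
          _ = ((p-1) * A + B) * (1/p) * u x ^ (1/p - 1) := by ring
      nlinarith [mul_le_mul_of_nonneg_left step hα.le]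
  have hmono : MonotoneOn f (Icc a b) := by
    apply monotoneOn_of_deriv_nonneg (convex_Icc a b) hcont
    · intro x hx
      rw [interior_Icc] at hx
      obtain ⟨f', hf', _⟩ := hderiv x hx
      exact hf'.differentiableAt.differentiableWithinAt
    · intro x hx
      rw [interior_Icc] at hx
      obtain ⟨f', hf', hf'0⟩ := hderiv x hx
      rw [hf'.deriv]; exact hf'0
  have hfa : f a = 0 := by
    have h0 : u a = 0 := by
      rw [hu]
      simp [sub_self, Real.zero_rpow (by linarith : p - 1 ≠ 0)]
    rw [hf]
    simp only [h0]
    rw [Real.zero_rpow (by positivity : 1/p ≠ 0)]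
    ring
  have hab' : f a ≤ f b := by
    rcases eq_or_lt_of_le hab with rfl | h
    · exact le_rfl
    · exact hmono (left_mem_Icc.2 hab) (right_mem_Icc.2 hab) hab
  rw [hfa] at hab'
  have hub : u b = (b - a) ^ (p-1) * (a ^ (-t) - b ^ (-t)) / t := rfl
  rw [hf] at hab'
  simp only at hab'
  rw [hub] at hab'
  linarith [hab']

/-- Power form of the key inequality. -/
lemma holder_pow {p t a b : ℝ} (hp : 1 < p) (ht : p - 1 < t) (ha : 0 < a) (hab : a ≤ b) :
    (a ^ (-((t-p+1)/p)) - b ^ (-((t-p+1)/p))) ^ p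
      ≤ ((t-p+1)/p) ^ p * ((b-a) ^ (p-1) * (a ^ (-t) - b ^ (-t)) / t) := by
  have hp0 : (0:ℝ) < p := by linarith
  have ht0 : (0:ℝ) < t := by linarith
  have htp : (0:ℝ) < t - p + 1 := by linarith
  have hα : (0:ℝ) < (t-p+1)/p := div_pos htp hp0
  have hroot := holder_root hp ht ha hab
  have h0 : 0 ≤ a ^ (-((t-p+1)/p)) - b ^ (-((t-p+1)/p)) :=
    sub_nonneg.2 (rpow_le_rpow_of_nonpos ha hab (neg_nonpos.2 hα.le))
  have hu0 : (0:ℝ) ≤ (b-a) ^ (p-1) * (a ^ (-t) - b ^ (-t)) / t :=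
    div_nonneg (mul_nonneg (rpow_nonneg (sub_nonneg.2 hab) _)
      (sub_nonneg.2 (rpow_le_rpow_of_nonpos ha hab (by linarith)))) ht0.le
  have h1 := Real.rpow_le_rpow h0 hroot hp0.le
  rwa [Real.mul_rpow hα.le (rpow_nonneg hu0 _), ← Real.rpow_mul hu0,
    show 1/p * p = 1 by field_simp, Real.rpow_one] at h1

/-- Key bracket estimate. -/
lemma bracket {p t a b τ1 τ2 : ℝ} (hp : 1 < p) (ht : p - 1 < t) (ha : 0 < a) (hab : a < b)
    (hτ1 : 0 ≤ τ1) (hτ2 : 0 ≤ τ2) :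
    (t - p + 1)/t * (τ1 ^ p * ((b-a) ^ (p-1) * (a ^ (-t) - b ^ (-t))))
      ≤ (b-a) ^ (p-1) * (τ1 ^ p * a ^ (-t) - τ2 ^ p * b ^ (-t))
        + |τ1 - τ2| ^ p * b ^ (-(t - p + 1)) := by
  have hp0 : (0:ℝ) < p := by linarith
  have ht0 : (0:ℝ) < t := by linarith
  have hb : (0:ℝ) < b := lt_trans ha hab
  have hD : (0:ℝ) < b - a := sub_pos.2 hab
  set θ : ℝ := (t - p + 1)/t with hθdef
  have hθ0 : 0 < θ := div_pos (by linarith) ht0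
  have hθ1 : θ < 1 := (div_lt_one ht0).2 (by linarith)
  set s : ℝ := a / b with hsdef
  have hs0 : 0 < s := div_pos ha hb
  have hs1 : s < 1 := (div_lt_one hb).2 hab
  set E : ℝ := s ^ (-t) with hEdef
  have hE1 : 1 ≤ E := Real.one_le_rpow_of_pos_of_le_one_of_nonpos hs0 hs1.le (by linarith)
  have hamgm : s ^ (1-p) ≤ θ + (1-θ) * E := by
    have h := Real.geom_mean_le_arith_mean2_weighted hθ0.le (by linarith : (0:ℝ) ≤ 1 - θ)
      zero_le_one (le_trans zero_le_one hE1) (by ring)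
    rw [Real.one_rpow, one_mul, mul_one] at h
    have e : E ^ (1-θ) = s ^ (1-p) := by
      rw [hEdef, ← Real.rpow_mul hs0.le]
      congr 1
      rw [hθdef]; field_simp; ring
    rwa [e] at h
  have hsplit : τ2 ^ p ≤ (1-s) ^ (1-p) * |τ1 - τ2| ^ p + s ^ (1-p) * τ1 ^ p := by
    rcases le_total τ1 τ2 with h | h
    · have habs : |τ1 - τ2| = τ2 - τ1 := by rw [abs_sub_comm]; exact abs_of_nonneg (by linarith)
      have hs := split hp (by linarith : (0:ℝ) < 1 - s) (by linarith)
        (by linarith : (0:ℝ) ≤ τ2 - τ1) hτ1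
      rw [show τ2 - τ1 + τ1 = τ2 by ring, show 1 - (1-s) = s by ring] at hs
      rwa [habs]
    · have h1 : τ2 ^ p ≤ τ1 ^ p := Real.rpow_le_rpow hτ2 h hp0.le
      have h2 : (1:ℝ) ≤ s ^ (1-p) :=
        Real.one_le_rpow_of_pos_of_le_one_of_nonpos hs0 hs1.le (by linarith)
      have h3 : 0 ≤ (1-s) ^ (1-p) * |τ1 - τ2| ^ p :=
        mul_nonneg (rpow_nonneg (by linarith) _) (rpow_nonneg (abs_nonneg _) _)
      nlinarith [rpow_nonneg hτ2 p, rpow_nonneg hτ1 p]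
  have hcore : τ2 ^ p - τ1 ^ p * (θ + (1-θ) * E) ≤ (1-s) ^ (1-p) * |τ1 - τ2| ^ p := by
    have := mul_le_mul_of_nonneg_left hamgm (rpow_nonneg hτ1 p)
    linarith
  have hEB : a ^ (-t) = E * b ^ (-t) := by
    rw [hEdef, hsdef, Real.div_rpow ha.le hb.le]
    field_simp
  have hDb : (b - a) ^ (p-1) * ((1-s) ^ (1-p)) = b ^ (p-1) := by
    have e1 : (1:ℝ) - s = (b - a)/b := by rw [hsdef]; field_simp
    have e2 : (b-a) ^ (p-1) * (b-a) ^ (1-p) = 1 := by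
      rw [← Real.rpow_add hD, show (p-1)+(1-p) = (0:ℝ) by ring, Real.rpow_zero]
    calc (b-a) ^ (p-1) * ((1-s) ^ (1-p))
        = (b-a) ^ (p-1) * ((b-a) ^ (1-p) / b ^ (1-p)) := by
          rw [e1, Real.div_rpow hD.le hb.le]
      _ = ((b-a) ^ (p-1) * (b-a) ^ (1-p)) / b ^ (1-p) := by ring
      _ = 1 / b ^ (1-p) := by rw [e2]
      _ = b ^ (p-1) := by
          rw [one_div, ← Real.rpow_neg hb.le, show -(1-p) = p-1 by ring]
  have hbsplit : b ^ (-(t-p+1)) = b ^ (p-1) * b ^ (-t) := by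
    rw [show -(t-p+1) = (p-1) + (-t) by ring, Real.rpow_add hb]
  have hDB0 : (0:ℝ) ≤ (b-a) ^ (p-1) * b ^ (-t) :=
    mul_nonneg (rpow_nonneg hD.le _) (rpow_nonneg hb.le _)
  have hmul := mul_le_mul_of_nonneg_left hcore hDB0
  have e4 : ((b-a) ^ (p-1) * b ^ (-t)) * ((1-s) ^ (1-p) * |τ1 - τ2| ^ p)
      = b ^ (p-1) * b ^ (-t) * |τ1 - τ2| ^ p := by
    rw [← hDb]; ring
  rw [e4] at hmul
  rw [hEB, hbsplit]
  nlinarith [hmul]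

set_option maxHeartbeats 1000000 in
/-- One-sided (ordered) version of the main theorem. -/
lemma main {p t a b τ1 τ2 : ℝ} (hp : 1 < p) (ht : p - 1 < t) (ha : 0 < a) (hb : 0 < b)
    (hab : a ≤ b) (hτ1 : τ1 ∈ Set.Icc (0:ℝ) 1) (hτ2 : τ2 ∈ Set.Icc (0:ℝ) 1) :
    (2:ℝ) ^ (1 - p) * p ^ p / (t - p + 1) ^ (p - 1) *
        |τ1 * a ^ ((-t + p - 1) / p) - τ2 * b ^ ((-t + p - 1) / p)| ^ p
      - ((t + 2 ^ (1 - p) * (p - 1)) * (p / (t - p + 1)) ^ p + 2 ^ (2 * (p - 1) ^ 2)) *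
          |τ1 - τ2| ^ p * (a ^ (-t + p - 1) + b ^ (-t + p - 1))
      ≤ |b - a| ^ (p - 2) * (b - a) * (τ1 ^ p * a ^ (-t) - τ2 ^ p * b ^ (-t)) := by
  have hp0 : (0:ℝ) < p := by linarith
  have ht0 : (0:ℝ) < t := by linarith
  have htp : (0:ℝ) < t - p + 1 := by linarith
  rw [show (-t + p - 1)/p = -((t-p+1)/p) by ring, show -t + p - 1 = -(t-p+1) by ring]
  set α : ℝ := (t - p + 1)/p with hαdef
  have hα : 0 < α := div_pos htp hp0
  set c1 : ℝ := (2:ℝ) ^ (1 - p) * p ^ p / (t - p + 1) ^ (p - 1) with hc1def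
  set c2 : ℝ := (t + 2 ^ (1 - p) * (p - 1)) * (p / (t - p + 1)) ^ p + 2 ^ (2 * (p - 1) ^ 2)
    with hc2def
  set P : ℝ := p * α ^ (1-p) with hPdef
  -- constants
  have h2c : (2:ℝ) ^ (1-p) * 2 ^ (p-1) = 1 := by
    rw [← Real.rpow_add two_pos, show (1-p)+(p-1) = (0:ℝ) by ring, Real.rpow_zero]
  have hA1 : α ^ (1-p) = (t-p+1) ^ (1-p) * p ^ (p-1) := by
    rw [hαdef, Real.div_rpow htp.le hp0.le, div_eq_mul_inv, ← Real.rpow_neg hp0.le,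
      show -(1-p) = p-1 by ring]
  have hA2 : (t-p+1) ^ (1-p) = ((t-p+1) ^ (p-1))⁻¹ := by
    rw [show (1:ℝ)-p = -(p-1) by ring, Real.rpow_neg htp.le]
  have hA3 : p ^ p = p * p ^ (p-1) := by
    have h := Real.rpow_add hp0 1 (p-1)
    rw [show (1:ℝ)+(p-1) = p by ring, Real.rpow_one] at h
    exact h
  have idB : c1 * 2 ^ (p-1) = P := by
    rw [hc1def, hPdef, hA1, hA2, hA3]
    have hβ : ((t-p+1):ℝ) ^ (p-1) ≠ 0 := ne_of_gt (rpow_pos_of_pos htp _)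
    field_simp
    linear_combination h2c
  have idA : P * α ^ p = t - p + 1 := by
    rw [hPdef, mul_assoc, ← Real.rpow_add hα, show (1-p)+p = (1:ℝ) by ring, Real.rpow_one,
      hαdef]
    field_simp
  have hαp : α ^ (-p) = (p/(t-p+1)) ^ p := by
    rw [Real.rpow_neg hα.le, hαdef, Real.div_rpow htp.le hp0.le, Real.div_rpow hp0.le htp.le,
      inv_div]
  have hPeq : P = (t-p+1) * α ^ (-p) := by
    rw [hPdef, show (1:ℝ)-p = 1+(-p) by ring, Real.rpow_add hα, Real.rpow_one, hαdef]
    field_simp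
  have hαpp : (0:ℝ) < α ^ (-p) := rpow_pos_of_pos hα _
  have h2e : (1:ℝ) ≤ 2 ^ (2*(p-1)^2) := by
    have := Real.rpow_le_rpow_of_exponent_le one_le_two
      (by nlinarith : (0:ℝ) ≤ 2*(p-1)^2)
    rwa [Real.rpow_zero] at this
  have hc2P : P ≤ c2 := by
    rw [hc2def, ← hαp, hPeq]
    have h21p : (0:ℝ) ≤ 2 ^ (1-p) * (p-1) :=
      mul_nonneg (rpow_nonneg (by norm_num) _) (by linarith)
    nlinarith [hαpp]
  have hc2one : (1:ℝ) ≤ c2 := by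
    rw [hc2def]
    have h21p : (0:ℝ) ≤ (t + 2 ^ (1-p) * (p-1)) * (p/(t-p+1)) ^ p := by
      apply mul_nonneg _ (rpow_nonneg (div_nonneg hp0.le htp.le) _)
      have : (0:ℝ) ≤ 2 ^ (1-p) * (p-1) :=
        mul_nonneg (rpow_nonneg (by norm_num) _) (by linarith)
      linarith
    linarith
  have hc1P : c1 ≤ P := by
    have h1 : (2:ℝ) ^ (1-p) ≤ 1 :=
      Real.rpow_le_one_of_one_le_of_nonpos one_le_two (by linarith)
    have h2 : 0 < (2:ℝ) ^ (p-1) := rpow_pos_of_pos two_pos _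
    nlinarith [idB, rpow_pos_of_pos hα (1-p), mul_pos hp0 (rpow_pos_of_pos hα (1-p))]
  have hc1pos : 0 < c1 := by
    rw [hc1def]; positivity
  have hPpos : 0 < P := by
    rw [hPdef]; positivity
  -- abbreviations
  have hΔ0 : (0:ℝ) ≤ |τ1 - τ2| := abs_nonneg _
  have hΔp0 : (0:ℝ) ≤ |τ1 - τ2| ^ p := rpow_nonneg hΔ0 _
  have hba : b ^ (-(t-p+1)) ≤ a ^ (-(t-p+1)) :=
    rpow_le_rpow_of_nonpos ha hab (by linarith)
  have hbβ : (0:ℝ) < b ^ (-(t-p+1)) := rpow_pos_of_pos hb _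
  have hbαp : (b ^ (-α)) ^ p = b ^ (-(t-p+1)) := by
    rw [← Real.rpow_mul hb.le]
    congr 1
    rw [hαdef]; field_simp
  have haαp : (a ^ (-α)) ^ p = a ^ (-(t-p+1)) := by
    rw [← Real.rpow_mul ha.le]
    congr 1
    rw [hαdef]; field_simp
  rcases eq_or_lt_of_le hab with rfl | hlt
  · -- a = b
    have hRHS : |a - a| ^ (p-2) * (a - a) * (τ1 ^ p * a ^ (-t) - τ2 ^ p * a ^ (-t)) = 0 := by
      rw [sub_self]
      ring
    rw [hRHS]
    have hX : |τ1 * a ^ (-α) - τ2 * a ^ (-α)| = |τ1 - τ2| * a ^ (-α) := by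
      rw [show τ1 * a ^ (-α) - τ2 * a ^ (-α) = (τ1 - τ2) * a ^ (-α) by ring, abs_mul,
        abs_of_pos (rpow_pos_of_pos ha _)]
    rw [hX, Real.mul_rpow hΔ0 (rpow_nonneg ha.le _), haαp]
    have haβ : (0:ℝ) < a ^ (-(t-p+1)) := rpow_pos_of_pos ha _
    have h5 : c1 * (|τ1 - τ2| ^ p * a ^ (-(t-p+1)))
        ≤ (2*c2) * (|τ1 - τ2| ^ p * a ^ (-(t-p+1))) :=
      mul_le_mul_of_nonneg_right (by linarith) (mul_nonneg hΔp0 haβ.le)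
    linarith
  · -- a < b
    have hD : (0:ℝ) < b - a := sub_pos.2 hlt
    have hG : |b - a| ^ (p-2) * (b - a) = (b - a) ^ (p-1) := by
      rw [abs_of_pos hD, ← Real.rpow_add_one hD.ne', show p-2+1 = p-1 by ring]
    rw [hG]
    have hdif : 0 ≤ a ^ (-α) - b ^ (-α) :=
      sub_nonneg.2 (rpow_le_rpow_of_nonpos ha hab (neg_nonpos.2 hα.le))
    have hbα : 0 < b ^ (-α) := rpow_pos_of_pos hb _
    -- step A
    have stepA : |τ1 * a ^ (-α) - τ2 * b ^ (-α)|
        ≤ τ1 * (a ^ (-α) - b ^ (-α)) + |τ1 - τ2| * b ^ (-α) := by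
      have e : τ1 * a ^ (-α) - τ2 * b ^ (-α)
          = τ1 * (a ^ (-α) - b ^ (-α)) + (τ1 - τ2) * b ^ (-α) := by ring
      rw [e]
      refine (abs_add_le _ _).trans ?_
      rw [abs_of_nonneg (mul_nonneg hτ1.1 hdif), abs_mul, abs_of_pos hbα]
    -- step B
    have h12 : ((1:ℝ)/2) ^ (1-p) = 2 ^ (p-1) := by
      rw [show (1:ℝ)/2 = 2⁻¹ by norm_num, ← Real.rpow_neg_one 2,
        ← Real.rpow_mul (by norm_num : (0:ℝ) ≤ 2)]
      congr 1; ring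
    have stepB : |τ1 * a ^ (-α) - τ2 * b ^ (-α)| ^ p
        ≤ 2 ^ (p-1) * (τ1 ^ p * (a ^ (-α) - b ^ (-α)) ^ p)
          + 2 ^ (p-1) * (|τ1 - τ2| ^ p * b ^ (-(t-p+1))) := by
      have h1 := Real.rpow_le_rpow (abs_nonneg _) stepA hp0.le
      have h2 := split (l := (1:ℝ)/2) hp (by norm_num) (by norm_num)
        (mul_nonneg hτ1.1 hdif) (mul_nonneg hΔ0 hbα.le)
      rw [show (1:ℝ) - 1/2 = 1/2 by norm_num, h12] at h2
      have e1 : (τ1 * (a ^ (-α) - b ^ (-α))) ^ p = τ1 ^ p * (a ^ (-α) - b ^ (-α)) ^ p :=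
        Real.mul_rpow hτ1.1 hdif
      have e2 : (|τ1 - τ2| * b ^ (-α)) ^ p = |τ1 - τ2| ^ p * b ^ (-(t-p+1)) := by
        rw [Real.mul_rpow hΔ0 hbα.le, hbαp]
      rw [e1, e2] at h2
      exact h1.trans h2
    -- step C : multiply by c1
    have stepC : c1 * |τ1 * a ^ (-α) - τ2 * b ^ (-α)| ^ p
        ≤ P * (τ1 ^ p * (a ^ (-α) - b ^ (-α)) ^ p) + P * (|τ1 - τ2| ^ p * b ^ (-(t-p+1))) := by
      have := mul_le_mul_of_nonneg_left stepB hc1pos.le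
      calc c1 * |τ1 * a ^ (-α) - τ2 * b ^ (-α)| ^ p
          ≤ c1 * (2 ^ (p-1) * (τ1 ^ p * (a ^ (-α) - b ^ (-α)) ^ p)
            + 2 ^ (p-1) * (|τ1 - τ2| ^ p * b ^ (-(t-p+1)))) := this
        _ = (c1 * 2 ^ (p-1)) * (τ1 ^ p * (a ^ (-α) - b ^ (-α)) ^ p)
            + (c1 * 2 ^ (p-1)) * (|τ1 - τ2| ^ p * b ^ (-(t-p+1))) := by ring
        _ = P * (τ1 ^ p * (a ^ (-α) - b ^ (-α)) ^ p)
            + P * (|τ1 - τ2| ^ p * b ^ (-(t-p+1))) := by rw [idB]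
    -- step D : Hölder
    have hτ1p : (0:ℝ) ≤ τ1 ^ p := rpow_nonneg hτ1.1 _
    have stepD : P * (τ1 ^ p * (a ^ (-α) - b ^ (-α)) ^ p)
        ≤ (t-p+1)/t * (τ1 ^ p * ((b-a) ^ (p-1) * (a ^ (-t) - b ^ (-t)))) := by
      have hhp := holder_pow hp ht ha hab
      have h1 := mul_le_mul_of_nonneg_left hhp hτ1p
      have h2 := mul_le_mul_of_nonneg_left h1 hPpos.le
      calc P * (τ1 ^ p * (a ^ (-α) - b ^ (-α)) ^ p)
          ≤ P * (τ1 ^ p * (α ^ p * ((b-a) ^ (p-1) * (a ^ (-t) - b ^ (-t)) / t))) := h2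
        _ = (P * α ^ p) * (τ1 ^ p * ((b-a) ^ (p-1) * (a ^ (-t) - b ^ (-t)))) / t := by ring
        _ = (t-p+1)/t * (τ1 ^ p * ((b-a) ^ (p-1) * (a ^ (-t) - b ^ (-t)))) := by
            rw [idA]; ring
    -- step E : bracket
    have stepE := bracket hp ht ha hlt hτ1.1 hτ2.1
    -- budget
    have budget : P * (|τ1 - τ2| ^ p * b ^ (-(t-p+1))) + |τ1 - τ2| ^ p * b ^ (-(t-p+1))
        ≤ c2 * |τ1 - τ2| ^ p * (a ^ (-(t-p+1)) + b ^ (-(t-p+1))) := by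
      have h6 : P * (|τ1 - τ2| ^ p * b ^ (-(t-p+1))) ≤ c2 * (|τ1 - τ2| ^ p * b ^ (-(t-p+1))) :=
        mul_le_mul_of_nonneg_right hc2P (mul_nonneg hΔp0 hbβ.le)
      have h7a : |τ1 - τ2| ^ p * b ^ (-(t-p+1)) ≤ |τ1 - τ2| ^ p * a ^ (-(t-p+1)) :=
        mul_le_mul_of_nonneg_left hba hΔp0
      have h7b : |τ1 - τ2| ^ p * a ^ (-(t-p+1))
          ≤ c2 * (|τ1 - τ2| ^ p * a ^ (-(t-p+1))) :=
        le_mul_of_one_le_left (mul_nonneg hΔp0 (rpow_pos_of_pos ha _).le) hc2one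
      linarith
    linarith [stepC, stepD, stepE, budget]

end DGI

/-- **Discrete gradient algebraic inequality** (Lemma A.5 of the paper), with the explicit
constants `c₁ = 2^{1-p} p^p / (t-p+1)^{p-1}` and
`c₂ = (t + 2^{1-p}(p-1)) (p/(t-p+1))^p + 2^{2(p-1)²}`. -/
theorem discrete_gradient_inequality
    (p t a b τ1 τ2 : ℝ) (hp : 1 < p) (ht : p - 1 < t) (ha : 0 < a) (hb : 0 < b)
    (hτ1 : τ1 ∈ Set.Icc (0:ℝ) 1) (hτ2 : τ2 ∈ Set.Icc (0:ℝ) 1) :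
    (2:ℝ) ^ (1 - p) * p ^ p / (t - p + 1) ^ (p - 1) *
        |τ1 * a ^ ((-t + p - 1) / p) - τ2 * b ^ ((-t + p - 1) / p)| ^ p
      - ((t + 2 ^ (1 - p) * (p - 1)) * (p / (t - p + 1)) ^ p + 2 ^ (2 * (p - 1) ^ 2)) *
          |τ1 - τ2| ^ p * (a ^ (-t + p - 1) + b ^ (-t + p - 1))
      ≤ |b - a| ^ (p - 2) * (b - a) * (τ1 ^ p * a ^ (-t) - τ2 ^ p * b ^ (-t)) := by
  rcases le_total a b with hab | hab
  · exact DGI.main hp ht ha hb hab hτ1 hτ2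
  · have H := DGI.main hp ht hb ha hab hτ2 hτ1
    rw [abs_sub_comm (τ2 * b ^ ((-t + p - 1) / p)) (τ1 * a ^ ((-t + p - 1) / p)),
      abs_sub_comm τ2 τ1, abs_sub_comm a b, add_comm (b ^ (-t + p - 1)) (a ^ (-t + p - 1))]
      at H
    linarith [H]
end

section
/- First algebraic inequality for negative powers. Let a, b > 0 and t > p−1 > 0. Then |b−a|^{p−2}(b−a)(a^{−t} − b^{−t}) ≥ t (p/(t−p+1))^p |a^{(−t+p−1)/p} − b^{(−t+p−1)/p}|^p. -/
open MeasureTheory Set Real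

-- integral computation
lemma int_rpow_Ioc {a b : ℝ} (ha : 0 < a) (hab : a ≤ b) {r : ℝ} (hr : r ≠ -1) :
    ∫ s in Set.Ioc a b, s ^ r = (b ^ (r + 1) - a ^ (r + 1)) / (r + 1) := by
  rw [← intervalIntegral.integral_of_le hab]
  exact integral_rpow (Or.inr ⟨hr, by
    rw [Set.uIcc_of_le hab]
    intro h
    exact absurd h.1 (not_le.2 ha)⟩)

lemma core_holder (p t a b : ℝ) (hp : 1 < p) (ht : p - 1 < t) (ha : 0 < a) (hab : a < b) :
    ((a ^ (-((t - p + 1) / p)) - b ^ (-((t - p + 1) / p))) / ((t - p + 1) / p)) ≤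
      ((a ^ (-t) - b ^ (-t)) / t) ^ (1 / p) * (b - a) ^ (1 / Real.conjExponent p) := by
  have hp0 : (0:ℝ) < p := lt_trans one_pos hp
  have hq := Real.HolderConjugate.conjExponent hp
  set q := Real.conjExponent p with hqdef
  set μ : Measure ℝ := volume.restrict (Set.Ioc a b) with hμ
  have hfin : IsFiniteMeasure μ := by
    constructor
    rw [hμ, Measure.restrict_apply_univ]
    exact measure_Ioc_lt_top
  set c : ℝ := -(t + 1) / p with hc
  set f : ℝ → ℝ := fun s => s ^ c with hf
  have hmeas : AEStronglyMeasurable f μ := by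
    apply Measurable.aestronglyMeasurable
    exact (measurable_id.pow_const c)
  have hbound : ∀ᵐ s ∂μ, ‖f s‖ ≤ a ^ c := by
    rw [hμ, ae_restrict_iff' measurableSet_Ioc]
    filter_upwards with s hs
    have hs0 : 0 < s := lt_trans ha hs.1
    rw [Real.norm_of_nonneg (Real.rpow_nonneg hs0.le c)]
    exact Real.rpow_le_rpow_of_nonpos ha hs.1.le
      (by rw [hc]; apply div_nonpos_of_nonpos_of_nonneg <;> linarith)
  have hfmem : MemLp f (ENNReal.ofReal p) μ := MemLp.of_bound hmeas _ hbound
  have hgmem : MemLp (fun _ : ℝ => (1:ℝ)) (ENNReal.ofReal q) μ := memLp_const 1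
  have hfn : 0 ≤ᵐ[μ] f := by
    rw [hμ, Filter.EventuallyLE, ae_restrict_iff' measurableSet_Ioc]
    filter_upwards with s hs
    simp only [Pi.zero_apply]
    exact Real.rpow_nonneg (lt_trans ha hs.1).le c
  have holder := integral_mul_le_Lp_mul_Lq_of_nonneg hq hfn
    (Filter.Eventually.of_forall (fun _ => zero_le_one)) hfmem hgmem
  simp only [mul_one, Real.one_rpow] at holder
  -- compute the three integrals
  have ht0 : (0:ℝ) < t := lt_trans (by linarith) ht
  have h1 : ∫ s, f s ∂μ =
      (a ^ (-((t - p + 1) / p)) - b ^ (-((t - p + 1) / p))) / ((t - p + 1) / p) := by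
    rw [hμ, hf]
    rw [int_rpow_Ioc ha hab.le (r := c) (by
      rw [hc]
      intro h
      have : -(t+1) = -1 * p := by
        field_simp at h; linarith [h]
      linarith [this])]
    have hc1 : c + 1 = -((t - p + 1) / p) := by rw [hc]; field_simp; ring
    rw [hc1, div_neg, ← neg_div, neg_sub]
  have h2 : ∫ s, f s ^ p ∂μ = (a ^ (-t) - b ^ (-t)) / t := by
    rw [hμ, hf]
    have : ∀ s ∈ Set.Ioc a b, (s ^ c) ^ p = s ^ (-(t+1)) := by
      intro s hs
      rw [← Real.rpow_mul (lt_trans ha hs.1).le]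
      congr 1
      rw [hc]; field_simp
    rw [setIntegral_congr_fun measurableSet_Ioc this]
    rw [int_rpow_Ioc ha hab.le (r := -(t+1)) (by intro h; linarith [neg_injective h])]
    have : -(t+1) + 1 = -t := by ring
    rw [this, div_eq_div_iff (by intro h; nlinarith [neg_eq_zero.1 h]) ht0.ne']
    ring
  have h3 : ∫ _, (1:ℝ) ∂μ = b - a := by
    rw [hμ]
    simp [Real.volume_Ioc, ENNReal.toReal_ofReal (by linarith : (0:ℝ) ≤ b - a), hab.le]
  rw [h1, h2, h3] at holder
  exact holder

lemma first_core (p t a b : ℝ) (hp : 1 < p) (ht : p - 1 < t) (ha : 0 < a) (hab : a < b) :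
    t * (p / (t - p + 1)) ^ p *
        |a ^ ((-t + p - 1) / p) - b ^ ((-t + p - 1) / p)| ^ p ≤
      |b - a| ^ (p - 2) * (b - a) * (a ^ (-t) - b ^ (-t)) := by
  have hp0 : (0:ℝ) < p := lt_trans one_pos hp
  have ht0 : (0:ℝ) < t := lt_trans (by linarith) ht
  set α : ℝ := (t - p + 1) / p with hαdef
  have hα : 0 < α := div_pos (by linarith) hp0
  have he : (-t + p - 1) / p = -α := by rw [hαdef]; ring
  set A : ℝ := a ^ (-α) - b ^ (-α) with hAdef
  set B : ℝ := a ^ (-t) - b ^ (-t) with hBdef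
  set D : ℝ := b - a with hDdef
  have hD : 0 < D := by rw [hDdef]; linarith
  have hA : 0 ≤ A := by
    rw [hAdef, sub_nonneg]
    exact Real.rpow_le_rpow_of_nonpos ha hab.le (by linarith)
  have hB : 0 ≤ B := by
    rw [hBdef, sub_nonneg]
    exact Real.rpow_le_rpow_of_nonpos ha hab.le (by linarith)
  have holder := core_holder p t a b hp ht ha hab
  rw [he, abs_of_nonneg hA, abs_of_pos hD]
  -- raise Hölder to the p-th power
  have key : (A / α) ^ p ≤ B / t * D ^ (p - 1) := by
    have h1 := Real.rpow_le_rpow (div_nonneg hA hα.le) holder hp0.le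
    rw [Real.mul_rpow (Real.rpow_nonneg (div_nonneg hB ht0.le) _)
        (Real.rpow_nonneg hD.le _), ← Real.rpow_mul (div_nonneg hB ht0.le),
        ← Real.rpow_mul hD.le] at h1
    have e1 : 1 / p * p = 1 := by field_simp
    have e2 : 1 / Real.conjExponent p * p = p - 1 := by
      simp only [Real.conjExponent]
      rw [one_div_div]
      field_simp
    rw [e1, e2, Real.rpow_one] at h1
    exact h1
  have lhs_eq : t * (p / (t - p + 1)) ^ p * A ^ p = t * (A / α) ^ p := by
    rw [show p / (t - p + 1) = 1 / α by rw [hαdef, one_div_div], mul_assoc,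
      ← Real.mul_rpow (by positivity) hA, one_div_mul_eq_div]
  have rhs_eq : t * (B / t * D ^ (p - 1)) = D ^ (p - 2) * D * B := by
    rw [show p - 1 = p - 2 + 1 by ring, Real.rpow_add_one hD.ne']
    field_simp
  rw [lhs_eq, ← rhs_eq]
  exact mul_le_mul_of_nonneg_left key ht0.le

/-- **First algebraic inequality for negative powers** (Lemma A.1 of the paper). -/
theorem first_algebraic_inequality
    (p t a b : ℝ) (hp : 1 < p) (ht : p - 1 < t) (ha : 0 < a) (hb : 0 < b) :
    t * (p / (t - p + 1)) ^ p *
        |a ^ ((-t + p - 1) / p) - b ^ ((-t + p - 1) / p)| ^ p ≤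
      |b - a| ^ (p - 2) * (b - a) * (a ^ (-t) - b ^ (-t)) := by
  rcases lt_trichotomy a b with hab | hab | hab
  · exact first_core p t a b hp ht ha hab
  · subst hab
    simp [sub_self, Real.zero_rpow (ne_of_gt (lt_trans one_pos hp))]
  · have h := first_core p t b a hp ht hb hab
    rw [abs_sub_comm (b ^ ((-t + p - 1) / p)) (a ^ ((-t + p - 1) / p)),
      abs_sub_comm a b] at h
    have e : |b - a| ^ (p - 2) * (a - b) * (b ^ (-t) - a ^ (-t)) =
        |b - a| ^ (p - 2) * (b - a) * (a ^ (-t) - b ^ (-t)) := by ring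
    rw [e] at h
    exact h
end

section
/- Second algebraic inequality for negative powers. Let a, b > 0 and t > p−1 > 0. Then |b−a|^{p−1} min{a^{−t}, b^{−t}} ≤ (p/(t−p+1))^{p−1} |a^{(−t+p−1)/p} − b^{(−t+p−1)/p}|^{p−1} min{a^{(−t+p−1)/p}, b^{(−t+p−1)/p}}. -/
open Real

/-- Tangent line inequality: for `x > 0` and `α < 0`, `1 + α*(x-1) ≤ x^α`. -/
lemma tangent_rpow_neg {x α : ℝ} (hx : 0 < x) (hα : α < 0) :
    1 + α * (x - 1) ≤ x ^ α := by
  have h1α : 0 < 1 - α := by linarith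
  have key := Real.geom_mean_le_arith_mean2_weighted
    (w₁ := 1 / (1 - α)) (w₂ := -α / (1 - α)) (p₁ := x ^ α) (p₂ := x)
    (by positivity) (div_nonneg (by linarith) h1α.le)
    (Real.rpow_nonneg hx.le α) hx.le (by field_simp; ring)
  have hl : (x ^ α) ^ (1 / (1 - α)) * x ^ (-α / (1 - α)) = 1 := by
    rw [← Real.rpow_mul hx.le, ← Real.rpow_add hx,
      show α * (1 / (1 - α)) + -α / (1 - α) = 0 from by field_simp; ring, Real.rpow_zero]
  rw [hl] at key
  have h2 := mul_le_mul_of_nonneg_left key h1α.le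
  have e1 : (1 - α) * (1 / (1 - α) * x ^ α + -α / (1 - α) * x)
      = x ^ α + (-α) * x := by field_simp
  rw [e1] at h2
  linarith

/-- Key estimate: for `0 < a ≤ b` and `α < 0`,
`(-α) * (b - a) * b ^ (α - 1) ≤ a ^ α - b ^ α`. -/
lemma key_estimate {a b α : ℝ} (ha : 0 < a) (hab : a ≤ b) (hα : α < 0) :
    (-α) * (b - a) * b ^ (α - 1) ≤ a ^ α - b ^ α := by
  have hb : 0 < b := lt_of_lt_of_le ha hab
  have hbα : 0 < b ^ α := Real.rpow_pos_of_pos hb α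
  have h := tangent_rpow_neg (x := a / b) (by positivity) hα
  have hd : (a / b) ^ α = a ^ α / b ^ α := Real.div_rpow ha.le hb.le α
  rw [hd] at h
  have h2 := mul_le_mul_of_nonneg_right h hbα.le
  rw [div_mul_cancel₀ _ hbα.ne'] at h2
  have e : (1 + α * (a / b - 1)) * b ^ α
      = b ^ α + α * (a - b) * (b ^ α / b) := by field_simp
  rw [e] at h2
  rw [Real.rpow_sub_one hb.ne']
  linarith [h2, show (-α) * (b - a) * (b ^ α / b) = α * (a - b) * (b ^ α / b) from by ring]

/-- Main inequality assuming `a ≤ b`. -/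
lemma second_algebraic_inequality_aux
    (p t a b : ℝ) (hp : 1 < p) (ht : p - 1 < t) (ha : 0 < a) (hb : 0 < b) (hab : a ≤ b) :
    |b - a| ^ (p - 1) * min (a ^ (-t)) (b ^ (-t)) ≤
      (p / (t - p + 1)) ^ (p - 1) *
        |a ^ ((-t + p - 1) / p) - b ^ ((-t + p - 1) / p)| ^ (p - 1) *
        min (a ^ ((-t + p - 1) / p)) (b ^ ((-t + p - 1) / p)) := by
  set α := (-t + p - 1) / p with hαdef
  have hp0 : 0 < p := by linarith
  have hα : α < 0 := div_neg_of_neg_of_pos (by linarith) hp0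
  have hC : 0 < p / (t - p + 1) := by
    apply div_pos hp0; linarith
  have hmin1 : min (a ^ (-t)) (b ^ (-t)) = b ^ (-t) :=
    min_eq_right (Real.rpow_le_rpow_of_nonpos ha hab (by linarith))
  have hba : b ^ α ≤ a ^ α := Real.rpow_le_rpow_of_nonpos ha hab hα.le
  have hmin2 : min (a ^ α) (b ^ α) = b ^ α := min_eq_right hba
  have habs1 : |b - a| = b - a := abs_of_nonneg (by linarith)
  have habs2 : |a ^ α - b ^ α| = a ^ α - b ^ α := abs_of_nonneg (by linarith)
  rw [hmin1, hmin2, habs1, habs2]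
  -- rewrite b ^ (-t)
  have hexp : -t = (α - 1) * (p - 1) + α := by
    rw [hαdef]; field_simp; ring
  have hbt : b ^ (-t) = (b ^ (α - 1)) ^ (p - 1) * b ^ α := by
    rw [hexp, Real.rpow_add hb, Real.rpow_mul hb.le]
  rw [hbt]
  have hb1 : 0 ≤ b ^ (α - 1) := (Real.rpow_pos_of_pos hb _).le
  have hbα : 0 ≤ b ^ α := (Real.rpow_pos_of_pos hb _).le
  have lhs_eq : |b - a| ^ (p - 1) * ((b ^ (α - 1)) ^ (p - 1) * b ^ α)
      = ((b - a) * b ^ (α - 1)) ^ (p - 1) * b ^ α := by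
    rw [habs1, Real.mul_rpow (by linarith) hb1]; ring
  rw [habs1] at lhs_eq
  rw [lhs_eq, ← Real.mul_rpow hC.le (by linarith : (0:ℝ) ≤ a ^ α - b ^ α)]
  apply mul_le_mul_of_nonneg_right _ hbα
  apply Real.rpow_le_rpow (mul_nonneg (by linarith) hb1) _ (by linarith)
  -- core: (b - a) * b ^ (α - 1) ≤ p / (t - p + 1) * (a ^ α - b ^ α)
  have hkey := key_estimate ha hab hα
  have hnegα : -α = (t - p + 1) / p := by rw [hαdef]; field_simp; ring
  have htp : 0 < t - p + 1 := by linarith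
  have hCα : p / (t - p + 1) * (-α) = 1 := by
    rw [hnegα]; field_simp
  have h2 := mul_le_mul_of_nonneg_left hkey hC.le
  calc (b - a) * b ^ (α - 1)
      = p / (t - p + 1) * (-α * (b - a) * b ^ (α - 1)) := by
        rw [show p / (t - p + 1) * (-α * (b - a) * b ^ (α - 1))
            = p / (t - p + 1) * -α * ((b - a) * b ^ (α - 1)) from by ring, hCα, one_mul]
    _ ≤ p / (t - p + 1) * (a ^ α - b ^ α) := h2

/-- **Second algebraic inequality for negative powers** (Lemma A.2 of the paper). -/
theorem second_algebraic_inequality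
    (p t a b : ℝ) (hp : 1 < p) (ht : p - 1 < t) (ha : 0 < a) (hb : 0 < b) :
    |b - a| ^ (p - 1) * min (a ^ (-t)) (b ^ (-t)) ≤
      (p / (t - p + 1)) ^ (p - 1) *
        |a ^ ((-t + p - 1) / p) - b ^ ((-t + p - 1) / p)| ^ (p - 1) *
        min (a ^ ((-t + p - 1) / p)) (b ^ ((-t + p - 1) / p)) := by
  rcases le_total a b with hab | hab
  · exact second_algebraic_inequality_aux p t a b hp ht ha hb hab
  · have := second_algebraic_inequality_aux p t b a hp ht hb ha hab
    rwa [abs_sub_comm, min_comm, abs_sub_comm (b ^ ((-t + p - 1) / p)),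
      min_comm (b ^ ((-t + p - 1) / p))] at this
end
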